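/- arXiv:1211.3689 — 14 statements merged into one kernel-verified Lean document; each statement's English description precedes it below -/
import Mathlib

section
/- For every finite simple graph G on n ≥ 1 vertices, ⌈n/(n − D_1(G))⌉ ≤ φ(G) ≤ ⌈n/(n − Δ(G))⌉, where Δ(G) is the maximum degree of G. -/
open Finset

/-- `W` is a *small set* in `G`: every vertex in `W` has degree at most `n - |W|`. -/
def SimpleGraph.IsSmallSet {V : Type*} [Fintype V] (G : SimpleGraph V)
    [DecidableRel G.Adj] (W : Finset V) : Prop :=
  ∀ v ∈ W, G.degree v ≤ Fintype.card V - W.card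

/-- `W` is a *δₖ-small set* in `G`: `∑_{v ∈ W} d(v)^k ≤ |W| (n - |W|)^k`. -/
def SimpleGraph.IsDeltaSmallSet {V : Type*} [Fintype V] (G : SimpleGraph V)
    [DecidableRel G.Adj] (k : ℕ) (W : Finset V) : Prop :=
  ∑ v ∈ W, (G.degree v) ^ k ≤ W.card * (Fintype.card V - W.card) ^ k

/-- `φ(G)`: least `r` such that `V(G)` decomposes into `r` small sets. -/
noncomputable def SimpleGraph.phi {V : Type*} [Fintype V] (G : SimpleGraph V)
    [DecidableRel G.Adj] : ℕ :=
  sInf {r | ∃ f : V → Fin r, ∀ i, G.IsSmallSet (Finset.univ.filter fun v => f v = i)}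

/-- `φ⁽ᵏ⁾(G)`: least `r` such that `V(G)` decomposes into `r` δₖ-small sets. -/
noncomputable def SimpleGraph.phiDelta {V : Type*} [Fintype V] (G : SimpleGraph V)
    [DecidableRel G.Adj] (k : ℕ) : ℕ :=
  sInf {r | ∃ f : V → Fin r, ∀ i, G.IsDeltaSmallSet k (Finset.univ.filter fun v => f v = i)}

/-- `D_k(G)`: the `k`-th power mean of the degrees of `G`. -/
noncomputable def SimpleGraph.degPowerMean {V : Type*} [Fintype V] (G : SimpleGraph V)
    [DecidableRel G.Adj] (k : ℕ) : ℝ :=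
  ((∑ v, (G.degree v : ℝ) ^ k) / (Fintype.card V : ℝ)) ^ ((1 : ℝ) / k)

/-- `α⁽ᵏ⁾(G)`: the maximum size of a δₖ-small set of `G`. -/
noncomputable def SimpleGraph.alphaDelta {V : Type*} [Fintype V] (G : SimpleGraph V)
    [DecidableRel G.Adj] (k : ℕ) : ℕ :=
  sSup {m | ∃ W : Finset V, G.IsDeltaSmallSet k W ∧ W.card = m}

/-- `S(G)`: the maximum size of a small set of `G`. -/
noncomputable def SimpleGraph.maxSmallSetSize {V : Type*} [Fintype V] (G : SimpleGraph V)
    [DecidableRel G.Adj] : ℕ :=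
  sSup {m | ∃ W : Finset V, G.IsSmallSet W ∧ W.card = m}

/-- `α(G)`: the independence number of `G`. -/
noncomputable def SimpleGraph.indepNumOrig {V : Type*} [Fintype V] (G : SimpleGraph V) : ℕ :=
  sSup {m | ∃ W : Finset V, (∀ v ∈ W, ∀ w ∈ W, ¬ G.Adj v w) ∧ W.card = m}

theorem stmt_0 {V : Type*} [Fintype V] (G : SimpleGraph V) [DecidableRel G.Adj]
    (hn : 1 ≤ Fintype.card V) :
    ⌈(Fintype.card V : ℝ) / ((Fintype.card V : ℝ) - G.degPowerMean 1)⌉₊ ≤ G.phi ∧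
      G.phi ≤ ⌈(Fintype.card V : ℝ) / ((Fintype.card V : ℝ) - (G.maxDegree : ℝ))⌉₊ := by
  classical
  have hne : Nonempty V := Fintype.card_pos_iff.mp hn
  set n := Fintype.card V with hn_def
  have hn0 : (0:ℝ) < n := by exact_mod_cast hn
  have hΔ : G.maxDegree < n := G.maxDegree_lt_card_verts
  set m := n - G.maxDegree with hm_def
  have hm0 : 0 < m := Nat.sub_pos_of_lt hΔ
  set r₀ := ⌈(n:ℝ)/((n:ℝ) - (G.maxDegree:ℝ))⌉₊ with hr₀
  have hcastm : ((m:ℕ):ℝ) = (n:ℝ) - (G.maxDegree:ℝ) := by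
    rw [hm_def, Nat.cast_sub hΔ.le]
  have hn_le : n ≤ r₀ * m := by
    have h1 : (n:ℝ)/m ≤ r₀ := by rw [hcastm]; exact Nat.le_ceil _
    have hmR : (0:ℝ) < m := by exact_mod_cast hm0
    have : (n:ℝ) ≤ (r₀:ℝ) * m := by rw [div_le_iff₀ hmR] at h1; linarith
    exact_mod_cast this
  let e : V ≃ Fin n := Fintype.equivFin V
  let f : V → Fin r₀ := fun v => ⟨(e v : ℕ) / m, by
    have hlt : (e v : ℕ) < n := (e v).2
    exact Nat.div_lt_of_lt_mul (lt_of_lt_of_le hlt (by rw [mul_comm]; exact hn_le))⟩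
  have hmem : r₀ ∈ {r | ∃ f : V → Fin r, ∀ i,
      G.IsSmallSet (Finset.univ.filter fun v => f v = i)} := by
    refine ⟨f, fun i v hv => ?_⟩
    have hcard : (Finset.univ.filter fun v => f v = i).card ≤ m := by
      have := Finset.card_le_card_of_injOn (s := Finset.univ.filter fun v => f v = i)
        (t := Finset.range m) (fun v => (e v : ℕ) % m)
        (fun v _ => Finset.mem_range.mpr (Nat.mod_lt _ hm0)) ?_
      · simpa using this
      · intro a ha b hb hab
        simp only [Finset.coe_filter, Set.mem_setOf_eq] at ha hb
        have hda : (e a : ℕ) / m = (i : ℕ) := congrArg Fin.val ha.2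
        have hdb : (e b : ℕ) / m = (i : ℕ) := congrArg Fin.val hb.2
        have hval : (e a : ℕ) = (e b : ℕ) := by
          conv_lhs => rw [← Nat.div_add_mod (e a : ℕ) m]
          conv_rhs => rw [← Nat.div_add_mod (e b : ℕ) m]
          simp only at hab
          rw [hda, hdb, hab]
        exact e.injective (Fin.val_injective hval)
    have hdv : G.degree v ≤ G.maxDegree := G.degree_le_maxDegree v
    unfold n at *
    omega
  have hub : G.phi ≤ r₀ := Nat.sInf_le hmem
  refine ⟨?_, hub⟩
  -- lower bound
  refine le_csInf ⟨r₀, hmem⟩ ?_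
  rintro r ⟨g, hg⟩
  have hr0 : 0 < r := by
    rcases hne with ⟨v⟩
    exact (g v).pos
  have hrR : (0:ℝ) < r := by exact_mod_cast hr0
  set S : ℝ := ∑ v, (G.degree v : ℝ) with hS_def
  have hD : G.degPowerMean 1 = S / n := by
    simp [SimpleGraph.degPowerMean, hS_def, hn_def]
  set c : Fin r → ℕ := fun i => (Finset.univ.filter fun v => g v = i).card with hc_def
  have hci_le : ∀ i, c i ≤ n := fun i => by
    simpa [hn_def] using Finset.card_filter_le (Finset.univ : Finset V) (fun v => g v = i)
  have hsumc : ∑ i, c i = n := by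
    rw [hn_def, ← Finset.card_univ]
    exact (Finset.card_eq_sum_card_fiberwise (fun v _ => Finset.mem_univ (g v))).symm
  have hsumcR : ∑ i, (c i : ℝ) = (n:ℝ) := by exact_mod_cast congrArg (Nat.cast (R := ℝ)) hsumc
  have hSnat : ∑ v, G.degree v ≤ ∑ i, c i * (n - c i) := by
    rw [← Finset.sum_fiberwise_of_maps_to (g := g) (fun v _ => Finset.mem_univ (g v))
      (fun v => G.degree v)]
    refine Finset.sum_le_sum fun i _ => ?_
    have := Finset.sum_le_card_nsmul (Finset.univ.filter fun v => g v = i)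
      (fun v => G.degree v) (n - c i) (fun v hv => hg i v hv)
    simpa [smul_eq_mul, hc_def] using this
  have hSR : S ≤ (n:ℝ)^2 - ∑ i, (c i:ℝ)^2 := by
    have h1 : S ≤ ∑ i, (c i:ℝ) * ((n:ℝ) - (c i:ℝ)) := by
      have h2 : ((∑ v, G.degree v : ℕ) : ℝ) ≤ ((∑ i, c i * (n - c i) : ℕ) : ℝ) := by
        exact_mod_cast hSnat
      rw [hS_def]
      push_cast at h2
      refine h2.trans (le_of_eq (Finset.sum_congr rfl fun i _ => ?_))
      rw [Nat.cast_sub (hci_le i)]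
    calc S ≤ ∑ i, (c i:ℝ) * ((n:ℝ) - (c i:ℝ)) := h1
      _ = (n:ℝ) * ∑ i, (c i:ℝ) - ∑ i, (c i:ℝ)^2 := by
          rw [Finset.mul_sum, ← Finset.sum_sub_distrib]
          exact Finset.sum_congr rfl fun i _ => by ring
      _ = (n:ℝ)^2 - ∑ i, (c i:ℝ)^2 := by rw [hsumcR]; ring
  have hCS : (n:ℝ)^2 ≤ (r:ℝ) * ∑ i, (c i:ℝ)^2 := by
    have := sq_sum_le_card_mul_sum_sq (s := (Finset.univ : Finset (Fin r)))
      (f := fun i => (c i : ℝ))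
    simpa [hsumcR] using this
  have key : S * r ≤ (n:ℝ)^2 * r - (n:ℝ)^2 := by nlinarith
  have h2 : (n:ℝ)/r ≤ (n:ℝ) - S/n := by
    rw [div_le_iff₀ hrR]
    have hs : S/n * n = S := div_mul_cancel₀ S hn0.ne'
    nlinarith [key, hs, hn0, hrR]
  have hpos : (0:ℝ) < (n:ℝ) - S/n := lt_of_lt_of_le (by positivity) h2
  rw [hD, Nat.ceil_le, div_le_iff₀ hpos]
  calc (n:ℝ) = (r:ℝ) * ((n:ℝ)/r) := by field_simp
    _ ≤ (r:ℝ) * ((n:ℝ) - S/n) := by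
        exact mul_le_mul_of_nonneg_left h2 (le_of_lt hrR)
end

section
/- For every finite simple graph G and every natural number k ≥ 1: φ^(k)(G) ≤ φ^(k+1)(G), φ^(k)(G) ≤ φ(G), and φ(G) ≤ ω(G) ≤ χ(G), where ω(G) is the clique number and χ(G) the chromatic number of G. -/
open Finset

/-- `α(G)`: the independence number of `G`. -/
noncomputable def SimpleGraph.indepNum' {V : Type*} [Fintype V] (G : SimpleGraph V) : ℕ :=
  sSup {m | ∃ W : Finset V, (∀ v ∈ W, ∀ w ∈ W, ¬ G.Adj v w) ∧ W.card = m}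


open scoped NNReal


lemma pm_aux {V : Type*} (W : Finset V) (d : V → ℕ) (M k : ℕ)
    (h : ∑ v ∈ W, (d v) ^ (k + 1) ≤ W.card * M ^ (k + 1)) :
    ∑ v ∈ W, (d v) ^ k ≤ W.card * M ^ k := by
  rcases Nat.eq_zero_or_pos k with rfl | hk
  · simp
  rcases Finset.eq_empty_or_nonempty W with rfl | hW
  · simp
  have hc : (0 : ℝ≥0) < (W.card : ℝ≥0) := by
    exact_mod_cast Nat.cast_pos.mpr (Finset.card_pos.mpr hW)
  set p : ℝ := (k + 1) / k with hp_def
  have hkR : (k : ℝ) ≠ 0 := by exact_mod_cast hk.ne'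
  have hp1 : 1 ≤ p := by
    rw [hp_def, le_div_iff₀ (by positivity)]
    push_cast; linarith
  have hw' : ∑ _v ∈ W, ((W.card : ℝ≥0))⁻¹ = 1 := by
    rw [Finset.sum_const, nsmul_eq_mul, mul_inv_cancel₀ hc.ne']
  have key := NNReal.rpow_arith_mean_le_arith_mean_rpow W
    (fun _ => ((W.card : ℝ≥0))⁻¹) (fun v => (d v : ℝ≥0) ^ k) hw' hp1
  have hzp : ∀ v : V, ((d v : ℝ≥0) ^ k) ^ p = (d v : ℝ≥0) ^ (k + 1) := by
    intro v
    rw [← NNReal.rpow_natCast ((d v : ℝ≥0)) k, ← NNReal.rpow_mul]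
    have : (k : ℝ) * p = ((k + 1 : ℕ) : ℝ) := by
      rw [hp_def]; field_simp; norm_cast
    rw [this, NNReal.rpow_natCast]
  simp only [hzp] at key
  have hsum : ∑ v ∈ W, ((W.card : ℝ≥0))⁻¹ * (d v : ℝ≥0) ^ (k + 1) ≤ (M : ℝ≥0) ^ (k + 1) := by
    rw [← Finset.mul_sum]
    have h' : (∑ v ∈ W, (d v : ℝ≥0) ^ (k + 1)) ≤ (W.card : ℝ≥0) * (M : ℝ≥0) ^ (k + 1) := by
      exact_mod_cast h
    calc ((W.card : ℝ≥0))⁻¹ * ∑ v ∈ W, (d v : ℝ≥0) ^ (k + 1)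
        ≤ ((W.card : ℝ≥0))⁻¹ * ((W.card : ℝ≥0) * (M : ℝ≥0) ^ (k + 1)) := by
          exact mul_le_mul_right h' _
      _ = (M : ℝ≥0) ^ (k + 1) := by rw [← mul_assoc, inv_mul_cancel₀ hc.ne', one_mul]
  have hMp : ((M : ℝ≥0) ^ k) ^ p = (M : ℝ≥0) ^ (k + 1) := by
    rw [← NNReal.rpow_natCast ((M : ℝ≥0)) k, ← NNReal.rpow_mul]
    have : (k : ℝ) * p = ((k + 1 : ℕ) : ℝ) := by rw [hp_def]; field_simp; norm_cast
    rw [this, NNReal.rpow_natCast]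
  have hfinal : (∑ v ∈ W, ((W.card : ℝ≥0))⁻¹ * (d v : ℝ≥0) ^ k) ^ p ≤ ((M : ℝ≥0) ^ k) ^ p := by
    rw [hMp]; exact key.trans hsum
  have h2 : ∑ v ∈ W, ((W.card : ℝ≥0))⁻¹ * (d v : ℝ≥0) ^ k ≤ (M : ℝ≥0) ^ k :=
    (NNReal.rpow_le_rpow_iff (lt_of_lt_of_le one_pos hp1)).mp hfinal
  rw [← Finset.mul_sum] at h2
  have h3 : (∑ v ∈ W, (d v : ℝ≥0) ^ k) ≤ (W.card : ℝ≥0) * (M : ℝ≥0) ^ k := by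
    calc (∑ v ∈ W, (d v : ℝ≥0) ^ k)
        = (W.card : ℝ≥0) * (((W.card : ℝ≥0))⁻¹ * ∑ v ∈ W, (d v : ℝ≥0) ^ k) := by
          rw [← mul_assoc, mul_inv_cancel₀ hc.ne', one_mul]
      _ ≤ (W.card : ℝ≥0) * (M : ℝ≥0) ^ k := mul_le_mul_right h2 _
  exact_mod_cast h3

lemma partition_aux {V : Type*} [Fintype V] (G : SimpleGraph V) [DecidableRel G.Adj] :
    ∀ (m : ℕ) (S : Finset V), (∀ t : Finset V, ↑t ⊆ (S : Set V) → G.IsClique ↑t → t.card ≤ m) →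
      ∃ g : V → ℕ, (∀ v ∈ S, g v < m) ∧ ∀ i, G.IsSmallSet (S.filter fun v => g v = i) := by
  classical
  intro m
  induction m with
  | zero =>
    intro S hS
    have hse : S = ∅ := by
      by_contra h
      obtain ⟨v, hv⟩ := Finset.nonempty_iff_ne_empty.mpr h
      have := hS {v} (by simp [hv]) (by simp)
      simp at this
    subst hse
    exact ⟨fun _ => 0, by simp, fun i => by simp [SimpleGraph.IsSmallSet]⟩
  | succ m ih =>
    intro S hS
    rcases S.eq_empty_or_nonempty with rfl | hne
    · exact ⟨fun _ => 0, by simp, fun i => by simp [SimpleGraph.IsSmallSet]⟩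
    obtain ⟨v, hv, hmax⟩ := S.exists_max_image (fun u => G.degree u) hne
    set T := S.filter (fun u => G.Adj v u) with hT
    have hTS : T ⊆ S := Finset.filter_subset _ _
    have hTc : ∀ t : Finset V, ↑t ⊆ (T : Set V) → G.IsClique ↑t → t.card ≤ m := by
      intro t ht hc
      have hadj : ∀ u ∈ t, G.Adj v u := by
        intro u hu
        have : u ∈ T := ht hu
        rw [hT, Finset.mem_filter] at this
        exact this.2
      have hvnot : v ∉ t := fun hvt => G.irrefl (hadj v hvt)
      have hc' : G.IsClique ↑(insert v t) := by
        rw [Finset.coe_insert]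
        exact hc.insert (fun u hu _ => hadj u hu)
      have hsub : ↑(insert v t) ⊆ (S : Set V) := by
        rw [Finset.coe_insert]
        intro u hu
        rcases hu with rfl | hu
        · exact hv
        · exact hTS (ht hu)
      have := hS _ hsub hc'
      rw [Finset.card_insert_of_notMem hvnot] at this
      omega
    obtain ⟨g', hg'lt, hg'small⟩ := ih T hTc
    refine ⟨fun u => if u ∈ T then g' u else m, ?_, ?_⟩
    · intro u hu
      by_cases h : u ∈ T
      · simp only [h, if_true]
        exact (hg'lt u h).trans (Nat.lt_succ_self m)
      · simp [h]
    · intro i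
      by_cases him : i = m
      · subst him
        have hset : (S.filter fun u => (if u ∈ T then g' u else i) = i) = S \ T := by
          ext u
          simp only [Finset.mem_filter, Finset.mem_sdiff]
          constructor
          · rintro ⟨huS, hif⟩
            refine ⟨huS, fun huT => ?_⟩
            rw [if_pos huT] at hif
            exact absurd hif (Nat.ne_of_lt (hg'lt u huT))
          · rintro ⟨huS, huT⟩
            exact ⟨huS, by rw [if_neg huT]⟩
        rw [hset]
        intro u hu
        have hus : u ∈ S := (Finset.mem_sdiff.mp hu).1
        have hdu : G.degree u ≤ G.degree v := hmax u hus
        have hdvn : G.degree v ≤ Fintype.card V := by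
          rw [← SimpleGraph.card_neighborFinset_eq_degree]
          exact Finset.card_le_univ _
        have hcard : (S \ T).card ≤ Fintype.card V - G.degree v := by
          have hsub2 : S \ T ⊆ Finset.univ \ G.neighborFinset v := by
            intro x hx
            rw [Finset.mem_sdiff] at hx ⊢
            refine ⟨Finset.mem_univ x, fun hm => hx.2 ?_⟩
            rw [hT, Finset.mem_filter]
            exact ⟨hx.1, (SimpleGraph.mem_neighborFinset _ _ _).mp hm⟩
          calc (S \ T).card ≤ (Finset.univ \ G.neighborFinset v).card :=
                Finset.card_le_card hsub2
            _ = Fintype.card V - G.degree v := by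
                rw [Finset.card_sdiff_of_subset (Finset.subset_univ _), Finset.card_univ,
                  SimpleGraph.card_neighborFinset_eq_degree]
        omega
      · have hset : (S.filter fun u => (if u ∈ T then g' u else m) = i)
            = T.filter fun u => g' u = i := by
          ext u
          simp only [Finset.mem_filter]
          constructor
          · rintro ⟨huS, hif⟩
            by_cases h : u ∈ T
            · rw [if_pos h] at hif; exact ⟨h, hif⟩
            · rw [if_neg h] at hif; exact absurd hif.symm him
          · rintro ⟨huT, hgi⟩
            exact ⟨hTS huT, by rw [if_pos huT]; exact hgi⟩
        rw [hset]
        exact hg'small i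


lemma small_delta {V : Type*} [Fintype V] (G : SimpleGraph V) [DecidableRel G.Adj]
    (k : ℕ) (W : Finset V) (h : G.IsSmallSet W) : G.IsDeltaSmallSet k W := by
  unfold SimpleGraph.IsDeltaSmallSet
  calc ∑ v ∈ W, G.degree v ^ k ≤ ∑ _v ∈ W, (Fintype.card V - W.card) ^ k :=
        Finset.sum_le_sum (fun v hv => Nat.pow_le_pow_left (h v hv) k)
    _ = W.card * (Fintype.card V - W.card) ^ k := by
        rw [Finset.sum_const, smul_eq_mul]

lemma delta_succ {V : Type*} [Fintype V] (G : SimpleGraph V) [DecidableRel G.Adj]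
    (k : ℕ) (W : Finset V) (h : G.IsDeltaSmallSet (k + 1) W) : G.IsDeltaSmallSet k W :=
  pm_aux W (fun v => G.degree v) (Fintype.card V - W.card) k h

theorem stmt_3 {V : Type*} [Fintype V] (G : SimpleGraph V) [DecidableRel G.Adj]
    (k : ℕ) (hk : 1 ≤ k) :
    G.phiDelta k ≤ G.phiDelta (k + 1) ∧ G.phiDelta k ≤ G.phi ∧
      G.phi ≤ G.cliqueNum ∧ (G.cliqueNum : ℕ∞) ≤ G.chromaticNumber := by
  have hclique : ∀ t : Finset V, ↑t ⊆ ((Finset.univ : Finset V) : Set V) → G.IsClique ↑t →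
      t.card ≤ G.cliqueNum := fun t _ hc => hc.card_le_cliqueNum
  have hω : G.cliqueNum ∈
      {r | ∃ f : V → Fin r, ∀ i, G.IsSmallSet (Finset.univ.filter fun v => f v = i)} := by
    obtain ⟨g, hg, hsmall⟩ := partition_aux G G.cliqueNum Finset.univ hclique
    refine ⟨fun v => ⟨g v, hg v (Finset.mem_univ v)⟩, fun i => ?_⟩
    have heq : (Finset.univ.filter fun v => (⟨g v, hg v (Finset.mem_univ v)⟩ : Fin _) = i)
        = Finset.univ.filter fun v => g v = i.val := by
      ext u
      simp [Fin.ext_iff]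
    rw [heq]
    exact hsmall i.val
  have hphi_le : G.phi ≤ G.cliqueNum := Nat.sInf_le hω
  have hphimem : G.phi ∈
      {r | ∃ f : V → Fin r, ∀ i, G.IsSmallSet (Finset.univ.filter fun v => f v = i)} :=
    Nat.sInf_mem ⟨_, hω⟩
  have hk1 : ∀ (j : ℕ), G.phiDelta j ≤ G.phi := by
    intro j
    obtain ⟨f, hf⟩ := hphimem
    exact Nat.sInf_le ⟨f, fun i => small_delta G j _ (hf i)⟩
  have hk2 : G.phiDelta k ≤ G.phiDelta (k + 1) := by
    have hne : {r | ∃ f : V → Fin r, ∀ i,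
        G.IsDeltaSmallSet (k + 1) (Finset.univ.filter fun v => f v = i)}.Nonempty := by
      obtain ⟨f, hf⟩ := hphimem
      exact ⟨G.phi, f, fun i => small_delta G (k + 1) _ (hf i)⟩
    obtain ⟨f, hf⟩ := Nat.sInf_mem hne
    exact Nat.sInf_le ⟨f, fun i => delta_succ G k _ (hf i)⟩
  have hchrom : (G.cliqueNum : ℕ∞) ≤ G.chromaticNumber := by
    by_contra h
    push_neg at h
    have hfree := SimpleGraph.cliqueFree_of_chromaticNumber_lt (n := G.cliqueNum) h
    obtain ⟨s, hs⟩ := G.exists_isNClique_cliqueNum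
    exact hfree s hs
  exact ⟨hk2, hk1 k, hphi_le, hchrom⟩
end

section
/- For every finite simple graph G on n ≥ 1 vertices and every natural number k ≥ 1, ⌈n/(n − D_1(G))⌉ ≤ φ^(k)(G) ≤ ⌈n/(n − Δ(G))⌉, where Δ(G) is the maximum degree of G and D_1(G) is the average degree of G. -/
open Finset

lemma aux_sum_le {V : Type*} (W : Finset V) (d : V → ℕ) (j M : ℕ)
    (h : ∑ v ∈ W, d v ^ (j + 1) ≤ W.card * M ^ (j + 1)) :
    ∑ v ∈ W, d v ≤ W.card * M := by
  have hR : ((∑ v ∈ W, d v : ℕ) : ℝ) ^ (j + 1) ≤ ((W.card * M : ℕ) : ℝ) ^ (j + 1) := by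
    push_cast
    calc (∑ v ∈ W, (d v : ℝ)) ^ (j + 1)
        ≤ (W.card : ℝ) ^ j * ∑ v ∈ W, (d v : ℝ) ^ (j + 1) :=
          pow_sum_le_card_mul_sum_pow (fun i _ => by positivity) j
      _ ≤ (W.card : ℝ) ^ j * ((W.card : ℝ) * (M : ℝ) ^ (j + 1)) := by
          gcongr
          exact_mod_cast h
      _ = ((W.card : ℝ) * M) ^ (j + 1) := by ring
  have := (pow_le_pow_iff_left₀ (by positivity) (by positivity) (by omega)).mp hR
  exact_mod_cast this

lemma aux_card_le {V : Type*} [Fintype V] (e : V ≃ Fin (Fintype.card V)) (m : ℕ) (hm : 0 < m)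
    (i : ℕ) : (univ.filter fun v => (e v : ℕ) / m = i).card ≤ m := by
  calc (univ.filter fun v => (e v : ℕ) / m = i).card
      ≤ (Finset.Ico (i * m) (i * m + m)).card := by
        apply Finset.card_le_card_of_injOn (fun v => (e v : ℕ))
        · intro v hv
          simp only [Finset.mem_coe, mem_filter, mem_univ, true_and] at hv
          rw [Finset.mem_coe, Finset.mem_Ico]
          constructor
          · calc i * m = (e v : ℕ) / m * m := by rw [hv]
              _ ≤ (e v : ℕ) := Nat.div_mul_le_self _ _
          · have h1 : (e v : ℕ) / m < i + 1 := by omega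
            have := (Nat.div_lt_iff_lt_mul hm).mp h1
            rw [Nat.succ_mul] at this
            omega
        · intro a _ b _ hab
          exact e.injective (Fin.val_injective hab)
    _ = m := by rw [Nat.card_Ico]; omega

lemma aux_mem {V : Type*} [Fintype V] (G : SimpleGraph V) [DecidableRel G.Adj]
    (hn : 1 ≤ Fintype.card V) (k : ℕ) :
    ⌈(Fintype.card V : ℝ) / ((Fintype.card V : ℝ) - (G.maxDegree : ℝ))⌉₊ ∈
      {r | ∃ f : V → Fin r, ∀ i, G.IsDeltaSmallSet k (Finset.univ.filter fun v => f v = i)} := by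
  have hne : Nonempty V := Fintype.card_pos_iff.mp hn
  set n := Fintype.card V with hn_def
  have hΔ : G.maxDegree < n := G.maxDegree_lt_card_verts
  set m := n - G.maxDegree with hm_def
  have hm : 0 < m := by omega
  set r := ⌈(n : ℝ) / ((n : ℝ) - (G.maxDegree : ℝ))⌉₊ with hr_def
  have hcast : ((m : ℕ) : ℝ) = (n : ℝ) - (G.maxDegree : ℝ) := by
    rw [hm_def, Nat.cast_sub hΔ.le]
  have hrm : n ≤ r * m := by
    have h1 : (n : ℝ) / (m : ℝ) ≤ r := by rw [hcast]; exact Nat.le_ceil _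
    have h2 : (n : ℝ) ≤ (r : ℝ) * (m : ℝ) := by
      rw [div_le_iff₀ (by exact_mod_cast hm)] at h1; exact h1
    exact_mod_cast h2
  have e := Fintype.equivFin V
  have hfv : ∀ v : V, (e v : ℕ) / m < r := fun v => by
    apply (Nat.div_lt_iff_lt_mul hm).mpr
    exact lt_of_lt_of_le (e v).isLt hrm
  refine ⟨fun v => ⟨(e v : ℕ) / m, hfv v⟩, fun i => ?_⟩
  set W := univ.filter (fun v => (⟨(e v : ℕ) / m, hfv v⟩ : Fin r) = i) with hW
  have hWcard : W.card ≤ m := by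
    refine le_trans (Finset.card_le_card ?_) (aux_card_le e m hm i.val)
    intro v hv
    simp only [hW, mem_filter, mem_univ, true_and] at hv ⊢
    exact congrArg Fin.val hv
  show ∑ v ∈ W, (G.degree v) ^ k ≤ W.card * (n - W.card) ^ k
  calc ∑ v ∈ W, (G.degree v) ^ k ≤ ∑ _v ∈ W, (n - W.card) ^ k := by
        apply Finset.sum_le_sum
        intro v _
        apply Nat.pow_le_pow_left
        have := G.degree_le_maxDegree v
        omega
    _ = W.card * (n - W.card) ^ k := by rw [Finset.sum_const, smul_eq_mul]

theorem stmt_4 {V : Type*} [Fintype V] (G : SimpleGraph V) [DecidableRel G.Adj]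
    (hn : 1 ≤ Fintype.card V) (k : ℕ) (hk : 1 ≤ k) :
    ⌈(Fintype.card V : ℝ) / ((Fintype.card V : ℝ) - G.degPowerMean 1)⌉₊ ≤ G.phiDelta k ∧
      G.phiDelta k ≤ ⌈(Fintype.card V : ℝ) / ((Fintype.card V : ℝ) - (G.maxDegree : ℝ))⌉₊ := by
  have hne : Nonempty V := Fintype.card_pos_iff.mp hn
  have hmem := aux_mem G hn k
  constructor
  · -- lower bound
    obtain ⟨j, rfl⟩ : ∃ j, k = j + 1 := ⟨k - 1, by omega⟩
    have hr_mem := Nat.sInf_mem (s := {r | ∃ f : V → Fin r,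
      ∀ i, G.IsDeltaSmallSet (j + 1) (Finset.univ.filter fun v => f v = i)}) ⟨_, hmem⟩
    set r := G.phiDelta (j + 1) with hr_def
    obtain ⟨f, hf⟩ := hr_mem
    change V → Fin r at f
    have hrpos : 0 < r := Fin.pos_iff_nonempty.mpr ⟨f (Classical.arbitrary V)⟩
    set n := Fintype.card V with hn_def
    set c : Fin r → ℕ := fun i => (univ.filter fun v => f v = i).card with hc
    have hcsum : ∑ i, c i = n := by
      rw [hn_def, ← Finset.card_univ, Finset.card_eq_sum_card_fiberwise (fun x _ => mem_univ (f x))]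
    have hc_le : ∀ i, c i ≤ n := fun i => by
      rw [hn_def, ← Finset.card_univ]; exact Finset.card_filter_le _ _
    have hSi : ∀ i, ∑ v ∈ univ.filter (fun v => f v = i), G.degree v ≤ c i * (n - c i) :=
      fun i => aux_sum_le _ _ j (n - c i) (hf i)
    set S := ∑ v, G.degree v with hS_def
    have hS_split : S = ∑ i, ∑ v ∈ univ.filter (fun v => f v = i), G.degree v := by
      rw [hS_def, ← Finset.sum_fiberwise univ f (fun v => G.degree v)]
    have hSn : S ≤ ∑ i, c i * (n - c i) := by
      rw [hS_split]; exact Finset.sum_le_sum fun i _ => hSi i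
    -- move to ℝ
    have hNpos : (0 : ℝ) < n := by exact_mod_cast hn
    have hRpos : (0 : ℝ) < r := by exact_mod_cast hrpos
    have hcastsum : ((∑ i, c i * (n - c i) : ℕ) : ℝ)
        = ∑ i, (c i : ℝ) * ((n : ℝ) - (c i : ℝ)) := by
      push_cast
      refine Finset.sum_congr rfl fun i _ => ?_
      rw [Nat.cast_sub (hc_le i)]
    have h1 : (S : ℝ) ≤ ∑ i, (c i : ℝ) * ((n : ℝ) - (c i : ℝ)) := by
      rw [← hcastsum]; exact_mod_cast hSn
    have h2 : ∑ i, (c i : ℝ) = (n : ℝ) := by exact_mod_cast hcsum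
    have h3 : (n : ℝ) ^ 2 ≤ (r : ℝ) * ∑ i, (c i : ℝ) ^ 2 := by
      have := sq_sum_le_card_mul_sum_sq (s := (univ : Finset (Fin r))) (f := fun i => (c i : ℝ))
      rw [h2] at this
      simpa using this
    have h4 : ∑ i, (c i : ℝ) * ((n : ℝ) - (c i : ℝ))
        = (n : ℝ) ^ 2 - ∑ i, (c i : ℝ) ^ 2 := by
      rw [Finset.sum_congr rfl (fun i _ => mul_sub (c i : ℝ) (n : ℝ) (c i : ℝ)),
        Finset.sum_sub_distrib, ← Finset.sum_mul, h2]
      ring_nf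
    have hSle : (S : ℝ) ≤ (n : ℝ) ^ 2 - (n : ℝ) ^ 2 / r := by
      rw [h4] at h1
      have h5 : (n : ℝ) ^ 2 / r ≤ ∑ i, (c i : ℝ) ^ 2 := by
        rw [div_le_iff₀ hRpos]
        linarith [h3]
      linarith
    have hD : G.degPowerMean 1 = (S : ℝ) / n := by
      rw [SimpleGraph.degPowerMean, hS_def, hn_def]
      push_cast
      simp [Real.rpow_one]
    rw [hD]
    apply Nat.ceil_le.mpr
    have key : (S : ℝ) / n ≤ (n : ℝ) - (n : ℝ) / r := by
      rw [div_le_iff₀ hNpos]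
      have : ((n : ℝ) - (n : ℝ) / r) * n = (n : ℝ) ^ 2 - (n : ℝ) ^ 2 / r := by ring
      rw [this]; exact hSle
    have hpos : (0 : ℝ) < (n : ℝ) - (S : ℝ) / n := by
      have : (0 : ℝ) < (n : ℝ) / r := by positivity
      linarith
    calc (n : ℝ) / ((n : ℝ) - (S : ℝ) / n) ≤ (n : ℝ) / ((n : ℝ) / r) := by
          apply div_le_div_of_nonneg_left hNpos.le (by positivity)
          linarith
      _ = (r : ℝ) := by
          field_simp
  · exact Nat.sInf_le hmem
end

section
/- For every finite simple graph G on n vertices there exists a natural number k_0 = k_0(G) such that for all k ≥ k_0, every δ_k-small set of G is a small set of G. -/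
open Finset

/-- `α(G)`: the independence number of `G`. -/
noncomputable def SimpleGraph.indepNumOfFinset {V : Type*} [Fintype V] (G : SimpleGraph V) : ℕ :=
  sSup {m | ∃ W : Finset V, (∀ v ∈ W, ∀ w ∈ W, ¬ G.Adj v w) ∧ W.card = m}


lemma aux_pow_ineq (b : ℕ) : ∀ j : ℕ, b ^ (j+1) + (j+1) * b ^ j ≤ (b+1) ^ (j+1) := by
  intro j
  induction j with
  | zero => simp
  | succ j ih =>
    have hb : 0 ≤ b ^ j := Nat.zero_le _
    calc b ^ (j+2) + (j+2) * b ^ (j+1)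
        ≤ (b+1) * (b ^ (j+1) + (j+1) * b ^ j) := by ring_nf; omega
      _ ≤ (b+1) * (b+1) ^ (j+1) := Nat.mul_le_mul_left _ ih
      _ = (b+1) ^ (j+2) := by ring

lemma aux_exists_pow (b m : ℕ) : ∃ k₀, ∀ k, k₀ ≤ k → m * b ^ k < (b+1) ^ k := by
  refine ⟨m * b + 1, fun k hk => ?_⟩
  obtain ⟨j, rfl⟩ : ∃ j, k = j + 1 := ⟨k - 1, by omega⟩
  rcases Nat.eq_zero_or_pos b with hb | hb
  · subst hb; simp
  · have h1 : 1 ≤ b ^ j := Nat.one_le_pow _ _ hb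
    have h2 : m * b ^ (j+1) + 1 ≤ b ^ (j+1) + (j+1) * b ^ j := by
      have : (m * b + 1) * b ^ j ≤ (j+1) * b ^ j := Nat.mul_le_mul_right _ (by omega)
      have hmb : (m * b + 1) * b ^ j = m * b ^ (j+1) + b ^ j := by rw [pow_succ]; ring
      omega
    have := aux_pow_ineq b j
    omega

theorem stmt_5 {V : Type*} [Fintype V] (G : SimpleGraph V) [DecidableRel G.Adj] :
    ∃ k₀ : ℕ, ∀ k, k₀ ≤ k → ∀ W : Finset V, G.IsDeltaSmallSet k W → G.IsSmallSet W := by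
  classical
  have key : ∀ W : Finset V, ∃ k₀, ∀ k, k₀ ≤ k → G.IsDeltaSmallSet k W → G.IsSmallSet W := by
    intro W
    by_cases hW : G.IsSmallSet W
    · exact ⟨0, fun k _ _ => hW⟩
    · simp only [SimpleGraph.IsSmallSet, not_forall] at hW
      obtain ⟨v, hv, hdv⟩ := hW
      set b := Fintype.card V - W.card with hb
      obtain ⟨k₀, hk₀⟩ := aux_exists_pow b W.card
      refine ⟨k₀, fun k hk hδ => absurd hδ ?_⟩
      intro hδ
      have hd : b + 1 ≤ G.degree v := by omega
      have h1 : (b+1) ^ k ≤ G.degree v ^ k := Nat.pow_le_pow_left hd k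
      have h2 : G.degree v ^ k ≤ ∑ u ∈ W, G.degree u ^ k :=
        Finset.single_le_sum (f := fun u => G.degree u ^ k) (fun u _ => Nat.zero_le _) hv
      have := hk₀ k hk
      have hδ' := hδ
      unfold SimpleGraph.IsDeltaSmallSet at hδ'
      rw [← hb] at hδ'
      omega
  choose f hf using key
  refine ⟨Finset.univ.sup f, fun k hk W hδ => ?_⟩
  exact hf W k (le_trans (Finset.le_sup (Finset.mem_univ W)) hk) hδ
end

section
/- For every finite simple graph G there exists a natural number k_0 = k_0(G) such that φ^(k)(G) = φ(G) for all k ≥ k_0 (and the sequence φ^(1)(G) ≤ φ^(2)(G) ≤ ⋯ stabilizes at φ(G)). -/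
open Finset

/-- `α(G)`: the independence number of `G`. -/
noncomputable def SimpleGraph.indepNumSet {V : Type*} [Fintype V] (G : SimpleGraph V) : ℕ :=
  sSup {m | ∃ W : Finset V, (∀ v ∈ W, ∀ w ∈ W, ¬ G.Adj v w) ∧ W.card = m}

lemma pow_aux (a k : ℕ) : a ^ (k+1) + (k+1) * a ^ k ≤ (a+1) ^ (k+1) := by
  induction k with
  | zero => simp [pow_succ]
  | succ k ih =>
    have h1 : (a ^ (k+1) + (k+1) * a ^ k) * (a+1)
        = a ^ (k+2) + (k+2) * a ^ (k+1) + (k+1) * a ^ k := by ring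
    calc a ^ (k+2) + (k+2) * a ^ (k+1)
        ≤ (a ^ (k+1) + (k+1) * a ^ k) * (a+1) := by omega
      _ ≤ (a+1) ^ (k+1) * (a+1) := Nat.mul_le_mul_right _ ih
      _ = (a+1) ^ (k+2) := by ring

lemma pow_key {a t k : ℕ} (ha : 1 ≤ a) (hk : (t-1) * a < k) :
    t * a ^ k < (a+1) ^ k := by
  obtain ⟨m, rfl⟩ : ∃ m, k = m + 1 := ⟨k - 1, by omega⟩
  have ham : 1 ≤ a ^ m := Nat.one_le_pow _ _ ha
  have hmain : t * a ^ (m+1) < a ^ (m+1) + (m+1) * a ^ m := by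
    rcases Nat.eq_zero_or_pos t with rfl | ht
    · have : 1 ≤ a ^ (m+1) := Nat.one_le_pow _ _ ha
      omega
    · have h2 : (t-1) * a ^ (m+1) < (m+1) * a ^ m := by
        have : (t-1) * a ^ (m+1) = ((t-1) * a) * a ^ m := by
          rw [pow_succ]; ring
        rw [this]
        exact Nat.mul_lt_mul_of_lt_of_le hk (le_refl _) (by omega)
      have h3 : t * a ^ (m+1) = a ^ (m+1) + (t-1) * a ^ (m+1) := by
        rw [← Nat.succ_pred_eq_of_pos ht, Nat.succ_mul, Nat.add_comm]; simp
      omega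
  exact lt_of_lt_of_le hmain (pow_aux a (m))

theorem stmt_6 {V : Type*} [Fintype V] (G : SimpleGraph V) [DecidableRel G.Adj] :
    ∃ k₀ : ℕ, ∀ k, k₀ ≤ k → G.phiDelta k = G.phi := by
  refine ⟨Fintype.card V ^ 2 + 1, fun k hk => ?_⟩
  have key : ∀ W : Finset V, G.IsDeltaSmallSet k W ↔ G.IsSmallSet W := by
    intro W
    constructor
    · intro h v hv
      by_contra hd
      push_neg at hd
      set n := Fintype.card V with hn
      set t := W.card with htdef
      have ht : t ≤ n := W.card_le_univ.trans_eq (by simp [hn])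
      have h1 : (n - t + 1) ^ k ≤ ∑ w ∈ W, G.degree w ^ k := by
        calc (n - t + 1) ^ k ≤ G.degree v ^ k := Nat.pow_le_pow_left hd k
          _ ≤ ∑ w ∈ W, G.degree w ^ k :=
            Finset.single_le_sum (f := fun w => G.degree w ^ k) (fun _ _ => Nat.zero_le _) hv
      have h2 : ∑ w ∈ W, G.degree w ^ k ≤ t * (n - t) ^ k := h
      rcases Nat.eq_zero_or_pos (n - t) with h0 | hpos
      · rw [h0] at h1 h2
        rw [zero_pow (by omega : k ≠ 0)] at h2
        simp at h1
        omega
      · have hlt : (t - 1) * (n - t) < k := by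
          have : (t - 1) * (n - t) ≤ n * n := Nat.mul_le_mul (by omega) (by omega)
          have : n * n = n ^ 2 := (sq n).symm
          omega
        have := pow_key hpos hlt
        have heq : n - t + 1 = (n - t) + 1 := rfl
        omega
    · intro h
      unfold SimpleGraph.IsDeltaSmallSet
      calc ∑ v ∈ W, G.degree v ^ k
          ≤ ∑ _v ∈ W, (Fintype.card V - W.card) ^ k :=
            Finset.sum_le_sum (fun v hv => Nat.pow_le_pow_left (h v hv) k)
        _ = W.card * (Fintype.card V - W.card) ^ k := by
            rw [Finset.sum_const, smul_eq_mul]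
  unfold SimpleGraph.phiDelta SimpleGraph.phi
  congr 1
  ext r
  simp only [Set.mem_setOf_eq]
  constructor
  · rintro ⟨f, hf⟩; exact ⟨f, fun i => (key _).mp (hf i)⟩
  · rintro ⟨f, hf⟩; exact ⟨f, fun i => (key _).mpr (hf i)⟩
end

section
/- Let r ≥ 1 be a natural number and let β_1, β_2, …, β_r ∈ [0,1] be real numbers with β_1 + β_2 + ⋯ + β_r = r − 1. Then for every natural number k with 1 ≤ k ≤ r, ∑_{i=1}^r (1 − β_i) β_i^k ≤ ((r−1)/r)^k. -/
open Finset

lemma stmt_7_aux (r : ℕ) (hr : 1 ≤ r) :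
    ∀ m : ℕ, m + 1 ≤ r → ∀ b : ℝ, 0 ≤ b →
      (r : ℝ) ^ (m + 2) * ((1 - b) * b ^ (m + 1)) ≤
        ((r : ℝ) - 1) ^ m *
          (((r : ℝ) - ((m : ℝ) + 1)) * ((r : ℝ) - 1) - ((r : ℝ) - ((m : ℝ) + 1) - 1) * r * b) := by
  have hR1 : (1 : ℝ) ≤ (r : ℝ) := by exact_mod_cast hr
  intro m
  induction m with
  | zero =>
    intro _ b hb
    norm_num
    nlinarith [sq_nonneg ((r : ℝ) - 1 - (r : ℝ) * b)]
  | succ m ih =>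
    intro hm b hb
    have hm' : m + 1 ≤ r := by omega
    have hgap := ih hm' b hb
    have hcoef : (0 : ℝ) ≤ (r : ℝ) - ((m : ℝ) + 2) := by
      have : ((m : ℝ) + 2) ≤ (r : ℝ) := by exact_mod_cast hm
      linarith
    have hpow : (0 : ℝ) ≤ ((r : ℝ) - 1) ^ m := pow_nonneg (by linarith) m
    have hrec : ((r : ℝ) - 1) ^ (m + 1) *
          (((r : ℝ) - ((m : ℝ) + 1 + 1)) * ((r : ℝ) - 1) - ((r : ℝ) - ((m : ℝ) + 1 + 1) - 1) * r * b)
          - (r : ℝ) ^ (m + 1 + 2) * ((1 - b) * b ^ (m + 1 + 1))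
        = (r : ℝ) * b *
            (((r : ℝ) - 1) ^ m *
              (((r : ℝ) - ((m : ℝ) + 1)) * ((r : ℝ) - 1) - ((r : ℝ) - ((m : ℝ) + 1) - 1) * r * b)
              - (r : ℝ) ^ (m + 2) * ((1 - b) * b ^ (m + 1)))
          + ((r : ℝ) - ((m : ℝ) + 2)) * ((r : ℝ) - 1) ^ m * ((r : ℝ) - 1 - (r : ℝ) * b) ^ 2 := by
      ring
    push_cast
    nlinarith [mul_nonneg (mul_nonneg (le_trans zero_le_one hR1) hb)
        (sub_nonneg.mpr hgap),
      mul_nonneg (mul_nonneg hcoef hpow) (sq_nonneg ((r : ℝ) - 1 - (r : ℝ) * b))]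

theorem stmt_7 (r k : ℕ) (hr : 1 ≤ r) (hk : 1 ≤ k) (hkr : k ≤ r)
    (β : Fin r → ℝ) (hβ : ∀ i, β i ∈ Set.Icc (0 : ℝ) 1)
    (hsum : ∑ i, β i = (r : ℝ) - 1) :
    ∑ i, (1 - β i) * β i ^ k ≤ (((r : ℝ) - 1) / r) ^ k := by
  obtain ⟨m, rfl⟩ : ∃ m, k = m + 1 := ⟨k - 1, by omega⟩
  have hR : (0 : ℝ) < (r : ℝ) := by exact_mod_cast hr
  have hsum2 : (r : ℝ) ^ (m + 2) * ∑ i, (1 - β i) * β i ^ (m + 1)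
      ≤ (r : ℝ) * ((r : ℝ) - 1) ^ (m + 1) := by
    rw [Finset.mul_sum]
    calc ∑ i, (r : ℝ) ^ (m + 2) * ((1 - β i) * β i ^ (m + 1))
        ≤ ∑ i : Fin r, ((r : ℝ) - 1) ^ m *
            (((r : ℝ) - ((m : ℝ) + 1)) * ((r : ℝ) - 1) - ((r : ℝ) - ((m : ℝ) + 1) - 1) * r * β i) :=
          Finset.sum_le_sum fun i _ => stmt_7_aux r hr m hkr (β i) (hβ i).1
      _ = (r : ℝ) * ((r : ℝ) - 1) ^ (m + 1) := by
          rw [← Finset.mul_sum, Finset.sum_sub_distrib, Finset.sum_const, ← Finset.mul_sum,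
            hsum]
          simp only [Finset.card_univ, Fintype.card_fin, nsmul_eq_mul]
          ring
  have hdiv : (((r : ℝ) - 1) / r) ^ (m + 1) = (r : ℝ) * ((r : ℝ) - 1) ^ (m + 1) / (r : ℝ) ^ (m + 2) := by
    rw [div_pow]
    field_simp
    ring
  rw [hdiv, le_div_iff₀ (by positivity)]
  linarith [hsum2]
end

section
/- Let G be a finite simple graph on n ≥ 1 vertices whose vertex set is partitioned into r pairwise disjoint δ_k-small sets V_1, …, V_r, and let k be a natural number with 1 ≤ k ≤ r. Then D_k(G) ≤ n(r−1)/r, i.e. ∑_{v∈V(G)} d(v)^k ≤ n · (n(r−1)/r)^k. -/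
open Finset

/-- `α(G)`: the independence number of `G`. -/
noncomputable def SimpleGraph.indepNumOld {V : Type*} [Fintype V] (G : SimpleGraph V) : ℕ :=
  sSup {m | ∃ W : Finset V, (∀ v ∈ W, ∀ w ∈ W, ¬ G.Adj v w) ∧ W.card = m}

lemma mul_nonneg_of_nonpos_nonpos' {a b : ℝ} (ha : a ≤ 0) (hb : b ≤ 0) : 0 ≤ a * b := by nlinarith

lemma lemA (k r : ℕ) (hk : 1 ≤ k) (hkr : k ≤ r) (t : ℝ) (ht : 0 ≤ t) :
    (r : ℝ) * t ^ k - ((r : ℝ) - 1) * t ^ (k + 1) ≤ 1 + ((k : ℝ) + 1 - (r : ℝ)) * (t - 1) := by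
  have hS : (∑ m ∈ Finset.range k, t ^ m) * (t - 1) = t ^ k - 1 := geom_sum_mul t k
  have hA : ∑ m ∈ Finset.Ico 1 k, t ^ m = (∑ m ∈ Finset.range k, t ^ m) - 1 := by
    rw [Finset.sum_Ico_eq_sub _ hk, Finset.sum_range_one]
    simp
  have hcard : (((Finset.Ico 1 k).card : ℕ) : ℝ) = (k : ℝ) - 1 := by
    rw [Nat.card_Ico]
    push_cast [Nat.cast_sub hk]
    ring
  have expand : ∑ m ∈ Finset.Ico 1 k, (1 - t) * (t ^ m - t ^ k)
      = (1 - t) * ((∑ m ∈ Finset.range k, t ^ m) - 1) - ((k : ℝ) - 1) * ((1 - t) * t ^ k) := by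
    simp only [mul_sub, Finset.sum_sub_distrib, ← Finset.mul_sum, Finset.sum_const,
      nsmul_eq_mul, hA]
    rw [hcard]
    ring
  have h1 : (0:ℝ) ≤ ∑ m ∈ Finset.Ico 1 k, (1 - t) * (t ^ m - t ^ k) := by
    apply Finset.sum_nonneg
    intro m hm
    obtain ⟨hm1, hm2⟩ := Finset.mem_Ico.mp hm
    rcases le_or_gt t 1 with h | h
    · have := pow_le_pow_of_le_one ht h hm2.le
      exact mul_nonneg (by linarith) (by linarith)
    · have := pow_le_pow_right₀ h.le hm2.le
      exact mul_nonneg_of_nonpos_nonpos' (by linarith) (by linarith)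
  have h2 : (0:ℝ) ≤ ((r:ℝ) - (k:ℝ)) * ((1 - t) * (1 - t ^ k)) := by
    have hrk : (k:ℝ) ≤ r := Nat.cast_le.mpr hkr
    apply mul_nonneg (by linarith)
    rcases le_or_gt t 1 with h | h
    · have : t ^ k ≤ 1 := pow_le_one₀ ht h
      exact mul_nonneg (by linarith) (by linarith)
    · have : 1 ≤ t ^ k := one_le_pow₀ h.le
      exact mul_nonneg_of_nonpos_nonpos' (by linarith) (by linarith)
  have key : 1 + ((k:ℝ) + 1 - r) * (t - 1) - ((r:ℝ) * t ^ k - ((r:ℝ) - 1) * t ^ (k+1))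
      = (∑ m ∈ Finset.Ico 1 k, (1 - t) * (t ^ m - t ^ k))
        + ((r:ℝ) - (k:ℝ)) * ((1 - t) * (1 - t ^ k)) := by
    rw [expand]
    linear_combination hS
  linarith

lemma lemB (k r : ℕ) (hk : 1 ≤ k) (hkr : k ≤ r) (hr2 : 2 ≤ r)
    (n s : ℝ) (hn : 0 < n) (hs : 0 ≤ s) :
    (n - s) * s ^ k ≤
      n ^ (k+1) * (((r:ℝ) - 1) / r) ^ k / r *
        (1 + ((k:ℝ) + 1 - r) * ((r:ℝ) * s / (((r:ℝ) - 1) * n) - 1)) := by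
  have hr2' : (2:ℝ) ≤ (r:ℝ) := by exact_mod_cast hr2
  have hr0 : (0:ℝ) < (r:ℝ) := by linarith
  have hr1 : (0:ℝ) < (r:ℝ) - 1 := by linarith
  set t : ℝ := (r:ℝ) * s / (((r:ℝ) - 1) * n) with hts
  have ht0 : 0 ≤ t := by positivity
  have hst : s = t * (((r:ℝ) - 1) * n / r) := by
    rw [hts]; field_simp
  have hM : (0:ℝ) ≤ n ^ (k+1) * (((r:ℝ)-1)/r) ^ k / r := by positivity
  have hLHS : (n - s) * s ^ k
      = n ^ (k+1) * (((r:ℝ)-1)/r) ^ k / r * ((r:ℝ) * t ^ k - ((r:ℝ) - 1) * t ^ (k+1)) := by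
    have hpow : t ^ k = (r:ℝ) ^ k * s ^ k / (((r:ℝ) - 1) ^ k * n ^ k) := by
      rw [hts, div_pow, mul_pow, mul_pow]
    have hpow' : t ^ (k+1) = (r:ℝ) ^ (k+1) * s ^ (k+1) / (((r:ℝ) - 1) ^ (k+1) * n ^ (k+1)) := by
      rw [hts, div_pow, mul_pow, mul_pow]
    rw [hpow, hpow', div_pow]
    have h1 : ((r:ℝ) - 1) ^ k ≠ 0 := by positivity
    have h2 : ((r:ℝ) - 1) ^ (k+1) ≠ 0 := by positivity
    have h3 : (n:ℝ) ^ k ≠ 0 := by positivity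
    have h4 : (n:ℝ) ^ (k+1) ≠ 0 := by positivity
    have h5 : ((r:ℝ)) ^ k ≠ 0 := by positivity
    field_simp
    ring
  rw [hLHS]
  exact mul_le_mul_of_nonneg_left (lemA k r hk hkr t ht0) hM

theorem stmt_8 {V : Type*} [Fintype V] (G : SimpleGraph V) [DecidableRel G.Adj]
    (hn : 1 ≤ Fintype.card V) (k r : ℕ) (hk : 1 ≤ k) (hkr : k ≤ r)
    (P : Fin r → Finset V)
    (hdisj : ∀ i j, i ≠ j → Disjoint (P i) (P j))
    (hcover : ∀ v : V, ∃ i, v ∈ P i)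
    (hsmall : ∀ i, G.IsDeltaSmallSet k (P i)) :
    G.degPowerMean k ≤ (Fintype.card V : ℝ) * ((r : ℝ) - 1) / r ∧
      ∑ v, (G.degree v : ℝ) ^ k ≤
        (Fintype.card V : ℝ) * ((Fintype.card V : ℝ) * ((r : ℝ) - 1) / r) ^ k := by
  classical
  set n := Fintype.card V with hnV
  have hnR : (0:ℝ) < (n:ℝ) := by exact_mod_cast Nat.lt_of_lt_of_le Nat.zero_lt_one hn
  have hbi : (Finset.univ : Finset (Fin r)).biUnion P = (Finset.univ : Finset V) := by
    ext v
    simp only [Finset.mem_biUnion, Finset.mem_univ, true_and, iff_true]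
    exact hcover v
  have hcardsum : ∑ i, (P i).card = n := by
    rw [← Finset.card_biUnion (fun i _ j _ hij => hdisj i j hij), hbi, Finset.card_univ]
  have hsplit : ∑ v, (G.degree v : ℝ) ^ k = ∑ i, ∑ v ∈ P i, (G.degree v : ℝ) ^ k := by
    rw [← hbi, Finset.sum_biUnion]
    exact fun i _ j _ hij => hdisj i j hij
  have hle : ∀ i, (P i).card ≤ n := fun i => Finset.card_le_univ _
  have hsm : ∀ i, ∑ v ∈ P i, (G.degree v : ℝ) ^ k
      ≤ ((P i).card : ℝ) * ((n:ℝ) - ((P i).card : ℝ)) ^ k := by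
    intro i
    have h := hsmall i
    calc ∑ v ∈ P i, (G.degree v : ℝ) ^ k
        = ((∑ v ∈ P i, (G.degree v) ^ k : ℕ) : ℝ) := by push_cast; rfl
      _ ≤ (((P i).card * (n - (P i).card) ^ k : ℕ) : ℝ) := Nat.cast_le.mpr h
      _ = ((P i).card : ℝ) * ((n:ℝ) - ((P i).card : ℝ)) ^ k := by
          push_cast [Nat.cast_sub (hle i)]; ring
  have hr1 : 1 ≤ r := hk.trans hkr
  have key : ∑ v, (G.degree v : ℝ) ^ k ≤ (n:ℝ) * ((n:ℝ) * ((r:ℝ) - 1) / r) ^ k := by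
    rcases eq_or_lt_of_le hr1 with hr | hr2
    · -- r = 1
      have hr' : r = 1 := hr.symm
      subst hr'
      have hcard : (P 0).card = n := by simpa using hcardsum
      have h0 := hsm 0
      rw [hcard, sub_self, zero_pow (by omega : k ≠ 0), mul_zero] at h0
      have hsum0 : ∑ v, (G.degree v : ℝ) ^ k ≤ 0 := by
        rw [hsplit]; simpa using h0
      simp only [Nat.cast_one]
      rw [show ((n:ℝ) * ((1:ℝ) - 1) / 1) = 0 by ring, zero_pow (by omega : k ≠ 0), mul_zero]
      exact hsum0
    · -- r ≥ 2
      have hr2' : 2 ≤ r := hr2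
      have hr2R : (2:ℝ) ≤ (r:ℝ) := by exact_mod_cast hr2'
      have hrpos : (0:ℝ) < (r:ℝ) := by linarith
      have hrm1 : (0:ℝ) < (r:ℝ) - 1 := by linarith
      set M : ℝ := (n:ℝ) ^ (k+1) * (((r:ℝ) - 1) / r) ^ k / r with hM
      have hstep : ∀ i, ((P i).card : ℝ) * ((n:ℝ) - ((P i).card : ℝ)) ^ k
          ≤ M * (1 + ((k:ℝ) + 1 - r) * ((r:ℝ) * ((n:ℝ) - ((P i).card : ℝ)) / (((r:ℝ) - 1) * n) - 1)) := by
        intro i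
        have hs : (0:ℝ) ≤ (n:ℝ) - ((P i).card : ℝ) := by
          have := hle i
          have : ((P i).card : ℝ) ≤ (n:ℝ) := by exact_mod_cast this
          linarith
        have := lemB k r hk hkr hr2' (n:ℝ) ((n:ℝ) - ((P i).card : ℝ)) hnR hs
        rw [sub_sub_cancel] at this
        exact this
      have hsumcard : ∑ i, ((P i).card : ℝ) = (n:ℝ) := by
        exact_mod_cast congrArg (Nat.cast : ℕ → ℝ) hcardsum
      have htotal : ∑ i : Fin r, M * (1 + ((k:ℝ) + 1 - r) * ((r:ℝ) * ((n:ℝ) - ((P i).card : ℝ)) / (((r:ℝ) - 1) * n) - 1))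
          = M * r := by
        have expand : ∀ i : Fin r, M * (1 + ((k:ℝ) + 1 - r) * ((r:ℝ) * ((n:ℝ) - ((P i).card : ℝ)) / (((r:ℝ) - 1) * n) - 1))
            = M * (1 - ((k:ℝ) + 1 - r)) + (M * ((k:ℝ) + 1 - r) * (r:ℝ) * (((r:ℝ) - 1) * n)⁻¹) * ((n:ℝ) - ((P i).card : ℝ)) := by
          intro i
          rw [div_eq_mul_inv]
          ring
        simp only [expand]
        rw [Finset.sum_add_distrib, Finset.sum_const, ← Finset.mul_sum,
          Finset.sum_sub_distrib, Finset.sum_const, hsumcard, Finset.card_univ,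
          Fintype.card_fin, nsmul_eq_mul]
        have hne : (((r:ℝ) - 1) * (n:ℝ)) ≠ 0 := by positivity
        field_simp
        ring
      have hMr : M * r = (n:ℝ) * ((n:ℝ) * ((r:ℝ) - 1) / r) ^ k := by
        rw [hM, div_pow, div_pow, mul_pow]
        field_simp
        ring
      calc ∑ v, (G.degree v : ℝ) ^ k
          = ∑ i, ∑ v ∈ P i, (G.degree v : ℝ) ^ k := hsplit
        _ ≤ ∑ i, ((P i).card : ℝ) * ((n:ℝ) - ((P i).card : ℝ)) ^ k :=
            Finset.sum_le_sum fun i _ => hsm i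
        _ ≤ ∑ i : Fin r, M * (1 + ((k:ℝ) + 1 - r) * ((r:ℝ) * ((n:ℝ) - ((P i).card : ℝ)) / (((r:ℝ) - 1) * n) - 1)) :=
            Finset.sum_le_sum fun i _ => hstep i
        _ = M * r := htotal
        _ = _ := hMr
  refine ⟨?_, key⟩
  -- part 1 from key
  have hy0 : (0:ℝ) ≤ (n:ℝ) * ((r:ℝ) - 1) / r := by
    have : (1:ℝ) ≤ (r:ℝ) := by exact_mod_cast hr1
    have h0 : (0:ℝ) < (r:ℝ) := by linarith
    apply div_nonneg (mul_nonneg hnR.le (by linarith)) h0.le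
  have h1 : (∑ v, (G.degree v : ℝ) ^ k) / (n:ℝ) ≤ ((n:ℝ) * ((r:ℝ) - 1) / r) ^ k := by
    rw [div_le_iff₀ hnR]
    calc (∑ v, (G.degree v : ℝ) ^ k) ≤ (n:ℝ) * ((n:ℝ) * ((r:ℝ) - 1) / r) ^ k := key
      _ = ((n:ℝ) * ((r:ℝ) - 1) / r) ^ k * (n:ℝ) := by ring
  have hx0 : (0:ℝ) ≤ (∑ v, (G.degree v : ℝ) ^ k) / (n:ℝ) := by positivity
  show ((∑ v, (G.degree v : ℝ) ^ k) / (n:ℝ)) ^ ((1:ℝ)/k) ≤ (n:ℝ) * ((r:ℝ) - 1) / r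
  calc ((∑ v, (G.degree v : ℝ) ^ k) / (n:ℝ)) ^ ((1:ℝ)/k)
      ≤ (((n:ℝ) * ((r:ℝ) - 1) / r) ^ k) ^ ((1:ℝ)/k) :=
        Real.rpow_le_rpow hx0 h1 (by positivity)
    _ = (n:ℝ) * ((r:ℝ) - 1) / r := by
        rw [← Real.rpow_natCast ((n:ℝ) * ((r:ℝ) - 1) / r) k, ← Real.rpow_mul hy0,
          mul_one_div, div_self (by exact_mod_cast Nat.one_le_iff_ne_zero.mp hk : (k:ℝ) ≠ 0),
          Real.rpow_one]
end

section
/- Let G be a finite simple graph on n ≥ 1 vertices whose vertex set is partitioned into r pairwise disjoint δ_k-small sets V_1, …, V_r, and let k be a natural number with 1 ≤ k ≤ r. Then r ≥ n/(n − D_k(G)). -/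
open Finset

/-- `α(G)`: the independence number of `G`. -/
noncomputable def SimpleGraph.indepNumFile {V : Type*} [Fintype V] (G : SimpleGraph V) : ℕ :=
  sSup {m | ∃ W : Finset V, (∀ v ∈ W, ∀ w ∈ W, ¬ G.Adj v w) ∧ W.card = m}

private lemma tangent_aux (b u : ℝ) (hu : 0 ≤ u) :
    ∀ m : ℕ, (m : ℝ) ≤ ((m : ℝ) + 1) * b →
      u ^ (m + 1) * (1 - u) ≤
        b ^ (m + 1) * (1 - b) + b ^ m * (((m : ℝ) + 1) - ((m : ℝ) + 2) * b) * (u - b) := by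
  intro m
  induction m with
  | zero =>
    intro hb
    push_cast
    nlinarith [sq_nonneg (u - b)]
  | succ m ih =>
    intro hb
    push_cast at hb
    have hb0 : (0:ℝ) ≤ b := by nlinarith
    have hbm : (m : ℝ) ≤ ((m : ℝ) + 1) * b := by nlinarith
    have h1 := ih hbm
    have h2 : u ^ (m + 2) * (1 - u) ≤
        u * (b ^ (m + 1) * (1 - b) + b ^ m * (((m : ℝ) + 1) - ((m : ℝ) + 2) * b) * (u - b)) := by
      calc u ^ (m + 2) * (1 - u) = u * (u ^ (m + 1) * (1 - u)) := by ring
        _ ≤ _ := mul_le_mul_of_nonneg_left h1 hu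
    have h4 : 0 ≤ b ^ m * ((((m:ℝ) + 2) * b - ((m:ℝ) + 1)) * (u - b) ^ 2) :=
      mul_nonneg (pow_nonneg hb0 m) (mul_nonneg (by nlinarith) (sq_nonneg _))
    have hid : b ^ (m + 2) * (1 - b) + b ^ (m + 1) * (((m:ℝ) + 2) - ((m:ℝ) + 3) * b) * (u - b)
        = u * (b ^ (m + 1) * (1 - b) + b ^ m * (((m:ℝ) + 1) - ((m:ℝ) + 2) * b) * (u - b))
          + b ^ m * ((((m:ℝ) + 2) * b - ((m:ℝ) + 1)) * (u - b) ^ 2) := by ring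
    push_cast
    nlinarith [h2, h4, hid]

theorem stmt_9 {V : Type*} [Fintype V] (G : SimpleGraph V) [DecidableRel G.Adj]
    (hn : 1 ≤ Fintype.card V) (k r : ℕ) (hk : 1 ≤ k) (hkr : k ≤ r)
    (P : Fin r → Finset V)
    (hdisj : ∀ i j, i ≠ j → Disjoint (P i) (P j))
    (hcover : ∀ v : V, ∃ i, v ∈ P i)
    (hsmall : ∀ i, G.IsDeltaSmallSet k (P i)) :
    (r : ℝ) ≥ (Fintype.card V : ℝ) / ((Fintype.card V : ℝ) - G.degPowerMean k) := by
  classical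
  obtain ⟨m, rfl⟩ : ∃ m, k = m + 1 := ⟨k - 1, (Nat.succ_pred_eq_of_pos hk).symm⟩
  set n := Fintype.card V with hnn
  have hn0 : (0:ℝ) < n := by exact_mod_cast hn
  have hr1 : 1 ≤ r := le_trans hk hkr
  have hr0 : (0:ℝ) < r := by exact_mod_cast hr1
  have hkrR : ((m:ℝ) + 1) ≤ r := by exact_mod_cast hkr
  set b : ℝ := 1 - 1 / r with hbdef
  clear_value b
  have hbr : (r:ℝ) * b = r - 1 := by rw [hbdef]; field_simp
  have hb0 : 0 ≤ b := by
    rw [hbdef]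
    have : 1 / (r:ℝ) ≤ 1 := by
      rw [div_le_one hr0]; exact_mod_cast hr1
    linarith
  choose f hf using hcover
  have hPf : ∀ i, P i = univ.filter fun v => f v = i := by
    intro i
    ext v
    simp only [mem_filter, mem_univ, true_and]
    constructor
    · intro hv
      by_contra hne
      exact (Finset.disjoint_left.mp (hdisj (f v) i hne) (hf v)) hv
    · rintro rfl
      exact hf v
  have hsum_deg : ∑ i, ∑ v ∈ P i, ((G.degree v : ℝ)) ^ (m+1)
      = ∑ v, ((G.degree v : ℝ)) ^ (m+1) := by
    simp only [hPf]
    exact Finset.sum_fiberwise univ f _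
  have hcard_le : ∀ i, (P i).card ≤ n := fun i => Finset.card_le_univ _
  have hsum_card : ∑ i, ((P i).card : ℝ) = (n : ℝ) := by
    have h : ∑ i, (P i).card = n := by
      simp only [hPf]
      rw [hnn, ← Finset.card_univ]
      exact (Finset.card_eq_sum_card_fiberwise (fun x _ => Finset.mem_univ (f x))).symm
    exact_mod_cast h
  have hpart : ∀ i, ∑ v ∈ P i, ((G.degree v : ℝ)) ^ (m+1)
      ≤ ((P i).card : ℝ) * ((n : ℝ) - (P i).card) ^ (m+1) := by
    intro i
    have h := hsmall i
    have hc := hcard_le i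
    have h2 := (Nat.cast_le (α := ℝ)).2 h
    push_cast [Nat.cast_sub (show (P i).card ≤ Fintype.card V from hc)] at h2
    exact h2
  have hbm : (m : ℝ) ≤ ((m:ℝ) + 1) * b := by
    have h1 : ((m:ℝ)+1) * (1/r) ≤ 1 := by
      rw [mul_one_div, div_le_one hr0]; exact hkrR
    have h2 : ((m:ℝ)+1) * b = ((m:ℝ)+1) - ((m:ℝ)+1) * (1/r) := by rw [hbdef]; ring
    linarith
  have htan : ∀ i, ((P i).card : ℝ) * ((n:ℝ) - (P i).card) ^ (m+1)
      ≤ (n:ℝ)^(m+2) * (b^(m+1)*(1-b)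
          + b^m*(((m:ℝ)+1) - ((m:ℝ)+2)*b) * (((n:ℝ) - (P i).card)/n - b)) := by
    intro i
    have hcn : ((P i).card : ℝ) ≤ (n:ℝ) := by exact_mod_cast hcard_le i
    have hu0 : 0 ≤ ((n:ℝ) - (P i).card)/n := div_nonneg (by linarith) hn0.le
    have h := tangent_aux b (((n:ℝ) - (P i).card)/n) hu0 m hbm
    have h2 := mul_le_mul_of_nonneg_left h (le_of_lt (pow_pos hn0 (m+2)))
    calc ((P i).card : ℝ) * ((n:ℝ) - (P i).card) ^ (m+1)
        = (n:ℝ)^(m+2) * ((((n:ℝ) - (P i).card)/n)^(m+1) * (1 - ((n:ℝ)-(P i).card)/n)) := by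
          have hn' : (n:ℝ) ≠ 0 := hn0.ne'
          rw [div_pow, pow_succ (n:ℝ) (m+1)]
          field_simp
          ring
      _ ≤ _ := h2
  have hsum_u : ∑ i, (((n:ℝ) - (P i).card)/n - b) = 0 := by
    have h1 : ∑ i : Fin r, (((n:ℝ) - (P i).card)/n) = (r:ℝ) - 1 := by
      rw [← Finset.sum_div, Finset.sum_sub_distrib, Finset.sum_const, Finset.card_univ,
        Fintype.card_fin, hsum_card, nsmul_eq_mul]
      field_simp
    rw [Finset.sum_sub_distrib, h1, Finset.sum_const, Finset.card_univ, Fintype.card_fin,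
      nsmul_eq_mul, hbr]
    ring
  have hrb : (r:ℝ) * (b^(m+1)*(1-b)) = b^(m+1) := by
    have h1 : (1:ℝ) - b = 1/r := by rw [hbdef]; ring
    rw [h1]
    field_simp
  have hkey : ∑ v, ((G.degree v : ℝ)) ^ (m+1) ≤ (n:ℝ)^(m+2) * b^(m+1) := by
    rw [← hsum_deg]
    calc ∑ i, ∑ v ∈ P i, ((G.degree v : ℝ)) ^ (m+1)
        ≤ ∑ i, ((P i).card : ℝ) * ((n:ℝ) - (P i).card) ^ (m+1) :=
          Finset.sum_le_sum (fun i _ => hpart i)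
      _ ≤ ∑ i, (n:ℝ)^(m+2) * (b^(m+1)*(1-b)
            + b^m*(((m:ℝ)+1) - ((m:ℝ)+2)*b) * (((n:ℝ) - (P i).card)/n - b)) :=
          Finset.sum_le_sum (fun i _ => htan i)
      _ = (n:ℝ)^(m+2) * ((r:ℝ) * (b^(m+1)*(1-b))
            + b^m*(((m:ℝ)+1) - ((m:ℝ)+2)*b) * (∑ i, (((n:ℝ) - (P i).card)/n - b))) := by
          rw [← Finset.mul_sum, Finset.sum_add_distrib, Finset.sum_const, Finset.card_univ,
            Fintype.card_fin, nsmul_eq_mul, ← Finset.mul_sum]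
      _ = (n:ℝ)^(m+2) * b^(m+1) := by rw [hsum_u, mul_zero, add_zero, hrb]
  have hnb0 : 0 ≤ (n:ℝ) * b := mul_nonneg hn0.le hb0
  have hD : G.degPowerMean (m+1) ≤ (n:ℝ) * b := by
    have hX0 : 0 ≤ (∑ v, ((G.degree v : ℝ)) ^ (m+1)) / n :=
      div_nonneg (Finset.sum_nonneg fun v _ => pow_nonneg (Nat.cast_nonneg _) _) hn0.le
    have hX : (∑ v, ((G.degree v : ℝ)) ^ (m+1)) / n ≤ ((n:ℝ)*b)^(m+1) := by
      rw [div_le_iff₀ hn0]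
      calc ∑ v, ((G.degree v : ℝ)) ^ (m+1) ≤ (n:ℝ)^(m+2)*b^(m+1) := hkey
        _ = ((n:ℝ)*b)^(m+1) * n := by ring
    have hexp : (0:ℝ) ≤ (1:ℝ)/((m+1:ℕ):ℝ) := by positivity
    have hmono := Real.rpow_le_rpow hX0 hX hexp
    have hrhs : (((n:ℝ)*b)^(m+1) : ℝ) ^ ((1:ℝ)/((m+1:ℕ):ℝ)) = (n:ℝ)*b := by
      rw [← Real.rpow_natCast ((n:ℝ)*b) (m+1), ← Real.rpow_mul hnb0]
      have h1 : ((m+1:ℕ):ℝ) * ((1:ℝ)/((m+1:ℕ):ℝ)) = 1 := by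
        have : ((m+1:ℕ):ℝ) ≠ 0 := by positivity
        field_simp
      rw [h1, Real.rpow_one]
    calc G.degPowerMean (m+1)
        = ((∑ v, ((G.degree v:ℝ))^(m+1)) / (n:ℝ)) ^ ((1:ℝ)/((m+1:ℕ):ℝ)) := rfl
      _ ≤ (((n:ℝ)*b)^(m+1)) ^ ((1:ℝ)/((m+1:ℕ):ℝ)) := hmono
      _ = (n:ℝ)*b := hrhs
  have hnb : (n:ℝ)*b = (n:ℝ) - (n:ℝ)/r := by rw [hbdef]; ring
  have hpos : 0 < (n:ℝ) - G.degPowerMean (m+1) := by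
    have h1 : 0 < (n:ℝ)/r := div_pos hn0 hr0
    rw [hnb] at hD
    linarith
  rw [ge_iff_le, div_le_iff₀ hpos]
  have h2 : (n:ℝ) = (r:ℝ) * ((n:ℝ)/r) := by field_simp
  calc (n:ℝ) = (r:ℝ) * ((n:ℝ)/r) := h2
    _ ≤ (r:ℝ) * ((n:ℝ) - G.degPowerMean (m+1)) := by
        apply mul_le_mul_of_nonneg_left _ hr0.le
        rw [hnb] at hD
        linarith
end

section
/- Let G be a finite simple graph on n ≥ 1 vertices. Then for every natural number s ≥ 2, φ^(s)(G) ≥ n/(n − D_2(G)). -/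
open Finset

/-- `α(G)`: the independence number of `G`. -/
noncomputable def SimpleGraph.indepNumAux {V : Type*} [Fintype V] (G : SimpleGraph V) : ℕ :=
  sSup {m | ∃ W : Finset V, (∀ v ∈ W, ∀ w ∈ W, ¬ G.Adj v w) ∧ W.card = m}

lemma tangent_aux_s11 {b t : ℝ} (hb0 : 0 ≤ b) (hb1 : b ≤ 1) (ht0 : 0 ≤ t) (ht : t ≤ 1/2) :
    b * (1 - b)^2 ≤ t * (1 - t)^2 + (1 - 4*t + 3*t^2) * (b - t) := by
  nlinarith [mul_nonneg (sq_nonneg (b - t)) (show (0:ℝ) ≤ 2 - 2*t - b by linarith)]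

-- the δs-partition set is nonempty
lemma phiDelta_nonempty {V : Type*} [Fintype V] (G : SimpleGraph V) [DecidableRel G.Adj]
    {s : ℕ} (hs : 1 ≤ s) :
    {r | ∃ f : V → Fin r, ∀ i, G.IsDeltaSmallSet s
      (Finset.univ.filter fun v => f v = i)}.Nonempty := by
  refine ⟨Fintype.card V, Fintype.equivFin V, fun i => ?_⟩
  have hfil : (Finset.univ.filter fun v => (Fintype.equivFin V) v = i)
      = {(Fintype.equivFin V).symm i} := by
    ext v
    simp [Equiv.apply_eq_iff_eq_symm_apply]
  rw [SimpleGraph.IsDeltaSmallSet, hfil]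
  simp only [Finset.sum_singleton, Finset.card_singleton, one_mul]
  exact Nat.pow_le_pow_left
    (Nat.le_sub_one_of_lt (G.degree_lt_card_verts _)) s

lemma class_sq_bound {V : Type*} [Fintype V] (G : SimpleGraph V) [DecidableRel G.Adj]
    {s : ℕ} (hs : 2 ≤ s) (W : Finset V) (h : G.IsDeltaSmallSet s W) :
    ∑ v ∈ W, (G.degree v : ℝ)^2 ≤
      (W.card : ℝ) * ((Fintype.card V : ℝ) - (W.card : ℝ))^2 := by
  have hle : W.card ≤ Fintype.card V := W.card_le_univ
  have hs0 : (s : ℝ) ≠ 0 := by positivity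
  rcases Nat.eq_zero_or_pos W.card with hc | hc
  · rw [Finset.card_eq_zero] at hc
    simp [hc]
  have ha : (0:ℝ) < W.card := by exact_mod_cast hc
  have hna : (0:ℝ) ≤ (Fintype.card V : ℝ) - W.card := by
    have : ((W.card : ℝ)) ≤ (Fintype.card V : ℝ) := by exact_mod_cast hle
    linarith
  -- real version of the hypothesis
  have hR : ∑ v ∈ W, (G.degree v : ℝ)^s ≤ (W.card : ℝ) * ((Fintype.card V : ℝ) - W.card)^s := by
    have h' := h
    unfold SimpleGraph.IsDeltaSmallSet at h'
    have hcast : ((Fintype.card V - W.card : ℕ) : ℝ) = (Fintype.card V : ℝ) - W.card :=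
      Nat.cast_sub hle
    calc ∑ v ∈ W, (G.degree v : ℝ)^s
        = ((∑ v ∈ W, (G.degree v)^s : ℕ) : ℝ) := by push_cast; ring
      _ ≤ ((W.card * (Fintype.card V - W.card)^s : ℕ) : ℝ) := by exact_mod_cast h'
      _ = (W.card : ℝ) * ((Fintype.card V : ℝ) - W.card)^s := by push_cast [hcast]; ring
  -- Jensen
  have hp : (1:ℝ) ≤ (s:ℝ)/2 := by
    have : (2:ℝ) ≤ (s:ℝ) := by exact_mod_cast hs
    linarith
  have hj := Real.arith_mean_le_rpow_mean W (fun _ => ((W.card : ℝ))⁻¹)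
      (fun v => (G.degree v : ℝ)^2) (fun i _ => by positivity)
      (by rw [Finset.sum_const, nsmul_eq_mul, mul_inv_cancel₀ (ne_of_gt ha)]) (fun i _ => by positivity) hp
  have hz : ∀ v : V, (((G.degree v : ℝ))^2) ^ ((s:ℝ)/2) = (G.degree v : ℝ)^s := by
    intro v
    rw [← Real.rpow_natCast (G.degree v : ℝ) 2, ← Real.rpow_mul (by positivity)]
    rw [show ((2:ℕ):ℝ) * ((s:ℝ)/2) = (s:ℝ) by push_cast; ring, Real.rpow_natCast]
  simp only [hz] at hj
  have hsum : ∑ x ∈ W, ((W.card:ℝ))⁻¹ * (G.degree x : ℝ)^s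
      ≤ ((Fintype.card V : ℝ) - W.card)^s := by
    rw [← Finset.mul_sum]
    calc ((W.card:ℝ))⁻¹ * ∑ v ∈ W, (G.degree v : ℝ)^s
        ≤ ((W.card:ℝ))⁻¹ * ((W.card : ℝ) * ((Fintype.card V : ℝ) - W.card)^s) :=
          mul_le_mul_of_nonneg_left hR (by positivity)
      _ = ((Fintype.card V : ℝ) - W.card)^s := by field_simp
  have hmono := Real.rpow_le_rpow
    (Finset.sum_nonneg fun i _ => by positivity) hsum (by positivity : (0:ℝ) ≤ 1/((s:ℝ)/2))
  have hrw : ((((Fintype.card V : ℝ) - W.card))^s) ^ (1/((s:ℝ)/2))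
      = ((Fintype.card V : ℝ) - W.card)^2 := by
    rw [← Real.rpow_natCast _ s, ← Real.rpow_mul hna,
      show (s:ℝ) * (1/((s:ℝ)/2)) = ((2:ℕ):ℝ) by push_cast; field_simp,
      Real.rpow_natCast]
  have key : ∑ x ∈ W, ((W.card:ℝ))⁻¹ * (G.degree x : ℝ)^2
      ≤ ((Fintype.card V : ℝ) - W.card)^2 := hj.trans (hrw ▸ hmono)
  calc ∑ v ∈ W, (G.degree v : ℝ)^2
      = (W.card : ℝ) * ∑ x ∈ W, ((W.card:ℝ))⁻¹ * (G.degree x : ℝ)^2 := by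
        rw [← Finset.mul_sum, ← mul_assoc, mul_inv_cancel₀ (ne_of_gt ha), one_mul]
    _ ≤ (W.card : ℝ) * ((Fintype.card V : ℝ) - W.card)^2 :=
        mul_le_mul_of_nonneg_left key ha.le

set_option maxHeartbeats 1000000 in
theorem stmt_11 {V : Type*} [Fintype V] (G : SimpleGraph V) [DecidableRel G.Adj]
    (hn : 1 ≤ Fintype.card V) (s : ℕ) (hs : 2 ≤ s) :
    (G.phiDelta s : ℝ) ≥
      (Fintype.card V : ℝ) / ((Fintype.card V : ℝ) - G.degPowerMean 2) := by
  classical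
  have hN : (0:ℝ) < Fintype.card V := by exact_mod_cast hn
  have hmem : ∃ f : V → Fin (G.phiDelta s), ∀ i,
      G.IsDeltaSmallSet s (Finset.univ.filter fun v => f v = i) :=
    Nat.sInf_mem (phiDelta_nonempty G (by omega : 1 ≤ s))
  generalize hgen : G.phiDelta s = r at hmem ⊢
  obtain ⟨f, hf⟩ := hmem
  have hr1 : 1 ≤ r := by
    by_contra hzero
    push_neg at hzero
    obtain ⟨v⟩ := Fintype.card_pos_iff.mp (by omega : 0 < Fintype.card V)
    have := Fin.pos_iff_nonempty.mpr ⟨f v⟩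
    omega
  -- case r = 1 : all degrees are zero
  rcases eq_or_lt_of_le hr1 with hr1' | hr2
  · subst hr1'
    have huniv : (Finset.univ.filter fun v => f v = (0 : Fin 1)) = Finset.univ := by
      ext v
      simp [Subsingleton.elim (f v) 0]
    have h0 := hf 0
    rw [SimpleGraph.IsDeltaSmallSet, huniv] at h0
    simp only [Finset.card_univ] at h0
    rw [Nat.sub_self, zero_pow (by omega : s ≠ 0), mul_zero, Nat.le_zero] at h0
    have hdeg : ∀ v : V, G.degree v = 0 := by
      intro v
      have := (Finset.sum_eq_zero_iff.mp h0) v (Finset.mem_univ v)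
      exact pow_eq_zero_iff (by omega : s ≠ 0) |>.mp this
    have hD : G.degPowerMean 2 = 0 := by
      rw [SimpleGraph.degPowerMean]
      simp [hdeg, Real.zero_rpow]
    rw [hD, sub_zero, div_self (ne_of_gt hN)]
    norm_num
    -- main case: r ≥ 2
  · rw [ge_iff_le]
    obtain ⟨N, hNdef⟩ : ∃ x : ℝ, x = (Fintype.card V : ℝ) := ⟨_, rfl⟩
    obtain ⟨t, htdef⟩ : ∃ x : ℝ, x = 1/(r:ℝ) := ⟨_, rfl⟩
    obtain ⟨a, hadef⟩ : ∃ g : Fin r → ℝ,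
      g = fun i => (((Finset.univ.filter fun v => f v = i).card : ℕ) : ℝ) := ⟨_, rfl⟩
    rw [← hNdef]
    have hN' : 0 < N := by rw [hNdef]; exact hN
    have hN0 : N ≠ 0 := hN'.ne'
    have hrR : (2:ℝ) ≤ (r:ℝ) := by exact_mod_cast hr2
    have hrpos : (0:ℝ) < (r:ℝ) := by linarith
    have hr0 : (r:ℝ) ≠ 0 := hrpos.ne'
    have ht0 : 0 ≤ t := by rw [htdef]; positivity
    have ht2 : t ≤ 1/2 := by
      rw [htdef, div_le_div_iff₀ hrpos (by norm_num)]
      linarith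
    have hrt : (r:ℝ) * t = 1 := by rw [htdef]; field_simp
    have hclass : ∀ i, ∑ v ∈ Finset.univ.filter (fun v => f v = i), (G.degree v : ℝ)^2
        ≤ a i * (N - a i)^2 := by
      intro i
      simp only [hadef, hNdef]
      exact class_sq_bound G hs _ (hf i)
    have hfib : ∑ i : Fin r, ∑ v ∈ Finset.univ.filter (fun v => f v = i), (G.degree v : ℝ)^2
        = ∑ v, (G.degree v : ℝ)^2 :=
      Finset.sum_fiberwise_of_maps_to (fun v _ => Finset.mem_univ (f v)) _
    have hacard : ∑ i, a i = N := by
      simp only [hadef, hNdef]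
      rw [← Nat.cast_sum]
      congr 1
      rw [← Finset.card_univ (α := V)]
      exact (Finset.card_eq_sum_card_fiberwise (fun v _ => Finset.mem_univ (f v))).symm
    have ha0 : ∀ i, 0 ≤ a i := by
      intro i
      simp only [hadef]
      positivity
    have ha1 : ∀ i, a i ≤ N := by
      intro i
      have h' : (Finset.univ.filter (fun v => f v = i)).card ≤ Fintype.card V :=
        (Finset.card_filter_le _ _).trans (le_of_eq Finset.card_univ)
      simp only [hadef, hNdef]
      exact_mod_cast h'
    have htan : ∀ i, a i * (N - a i)^2 ≤
        N^3 * (t*(1-t)^2 + (1 - 4*t + 3*t^2)*(a i/N - t)) := by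
      intro i
      have hb0 : 0 ≤ a i / N := div_nonneg (ha0 i) hN'.le
      have hb1 : a i / N ≤ 1 := by
        rw [div_le_one hN']
        exact ha1 i
      have htst := tangent_aux_s11 hb0 hb1 ht0 ht2
      have heq : a i * (N - a i)^2 = N^3 * ((a i/N) * (1 - a i/N)^2) := by
        field_simp
      rw [heq]
      have hN3 : (0:ℝ) ≤ N^3 := by positivity
      nlinarith [mul_le_mul_of_nonneg_left htst hN3]
    have hsum2 : ∑ v, (G.degree v : ℝ)^2 ≤ N^3 * (1-t)^2 := by
      rw [← hfib]
      have haff : ∀ i : Fin r, N^3 * (t*(1-t)^2 + (1 - 4*t + 3*t^2)*(a i/N - t))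
          = (N^3*(t*(1-t)^2 - (1 - 4*t + 3*t^2)*t)) + (N^2*(1 - 4*t + 3*t^2)) * a i := by
        intro i
        field_simp
        ring
      calc ∑ i : Fin r, ∑ v ∈ Finset.univ.filter (fun v => f v = i), (G.degree v : ℝ)^2
          ≤ ∑ i : Fin r, (N^3 * (t*(1-t)^2 + (1 - 4*t + 3*t^2)*(a i/N - t))) :=
            Finset.sum_le_sum fun i _ => (hclass i).trans (htan i)
        _ = ∑ i : Fin r, ((N^3*(t*(1-t)^2 - (1 - 4*t + 3*t^2)*t)) + (N^2*(1 - 4*t + 3*t^2)) * a i) :=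
            Finset.sum_congr rfl fun i _ => haff i
        _ = (r:ℝ) * (N^3*(t*(1-t)^2 - (1 - 4*t + 3*t^2)*t)) + (N^2*(1 - 4*t + 3*t^2)) * N := by
            rw [Finset.sum_add_distrib, Finset.sum_const, ← Finset.mul_sum, hacard,
              Finset.card_univ, Fintype.card_fin, nsmul_eq_mul]
        _ = N^3 * (1-t)^2 := by
            rw [htdef]
            field_simp
            ring
    have hNt0 : 0 ≤ N * (1 - t) := by nlinarith
    have hx : (∑ v, (G.degree v : ℝ)^2) / N ≤ (N*(1-t))^2 := by
      rw [div_le_iff₀ hN']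
      nlinarith [hsum2]
    have hDle : G.degPowerMean 2 ≤ N * (1 - t) := by
      have hmono := Real.rpow_le_rpow
        (by positivity : (0:ℝ) ≤ (∑ v, (G.degree v : ℝ)^2) / N) hx
        (by norm_num : (0:ℝ) ≤ 1/2)
      have hrw : ((N*(1-t))^2) ^ ((1:ℝ)/2) = N*(1-t) := by
        rw [← Real.rpow_natCast (N*(1-t)) 2, ← Real.rpow_mul hNt0]
        norm_num
      rw [SimpleGraph.degPowerMean, ← hNdef,
        show ((1:ℝ)/((2:ℕ):ℝ)) = (1:ℝ)/2 by norm_num]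
      exact hmono.trans_eq hrw
    have hNt : 0 < N * t := by
      rw [htdef]
      positivity
    have hgap : N * t ≤ N - G.degPowerMean 2 := by nlinarith [hDle]
    have hpos : (0:ℝ) < N - G.degPowerMean 2 := by linarith
    rw [div_le_iff₀ hpos]
    have h5 : (r:ℝ) * (N * t) ≤ (r:ℝ) * (N - G.degPowerMean 2) :=
      mul_le_mul_of_nonneg_left hgap hrpos.le
    have h6 : (r:ℝ) * (N * t) = N := by
      rw [← mul_assoc, mul_comm (r:ℝ) N, mul_assoc, hrt, mul_one]
    linarith
end

section
/- Let G be a finite simple graph on n ≥ 1 vertices. Then for every natural number k with 1 ≤ k ≤ φ(G), φ(G) ≥ n/(n − D_k(G)). -/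
open Finset

lemma tangent_aux_s12 (k : ℕ) (hk : 1 ≤ k) : ∀ s a : ℝ, 0 ≤ s → (k : ℝ) * s ≤ 1 → 0 ≤ a → a ≤ 1 →
    a * (1 - a) ^ k ≤ s * (1 - s) ^ k + (1 - s) ^ (k - 1) * (1 - ((k : ℝ) + 1) * s) * (a - s) := by
  induction k, hk using Nat.le_induction with
  | base =>
    intro s a hs hks ha0 ha1
    norm_num
    nlinarith [sq_nonneg (a - s)]
  | succ k hk ih =>
    intro s a hs hks ha0 ha1
    have hks' : (k : ℝ) * s ≤ 1 := by push_cast at hks ⊢; nlinarith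
    have h1 := ih s a hs hks' ha0 ha1
    obtain ⟨m, rfl⟩ : ∃ m, k = m + 1 := ⟨k - 1, (Nat.succ_pred_eq_of_pos hk).symm⟩
    have hks2 : ((m : ℝ) + 2) * s ≤ 1 := by push_cast at hks; linarith
    have hs1 : s ≤ 1 := by nlinarith [mul_nonneg (Nat.cast_nonneg (α := ℝ) m) hs]
    simp only [Nat.add_sub_cancel] at h1 ⊢
    have h2 : (1 - a) * (a * (1 - a) ^ (m + 1)) ≤ (1 - a) *
        (s * (1 - s) ^ (m + 1) + (1 - s) ^ m * (1 - ((↑(m + 1) : ℝ) + 1) * s) * (a - s)) :=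
      mul_le_mul_of_nonneg_left h1 (by linarith)
    have h3 : a * (1 - a) ^ (m + 1 + 1) = (1 - a) * (a * (1 - a) ^ (m + 1)) := by ring
    have h4 : s * (1 - s) ^ (m + 1 + 1) + (1 - s) ^ (m + 1) * (1 - ((↑(m + 1 + 1) : ℝ) + 1) * s) * (a - s)
        - (1 - a) * (s * (1 - s) ^ (m + 1) + (1 - s) ^ m * (1 - ((↑(m + 1) : ℝ) + 1) * s) * (a - s))
        = (1 - s) ^ m * (1 - ((m : ℝ) + 2) * s) * (a - s) ^ 2 := by push_cast; ring
    have h5 : 0 ≤ (1 - s) ^ m * (1 - ((m : ℝ) + 2) * s) * (a - s) ^ 2 :=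
      mul_nonneg (mul_nonneg (pow_nonneg (by linarith) m) (by linarith)) (sq_nonneg _)
    linarith [h2, h3 ▸ h2]

theorem stmt_12 {V : Type*} [Fintype V] (G : SimpleGraph V) [DecidableRel G.Adj]
    (hn : 1 ≤ Fintype.card V) (k : ℕ) (hk : 1 ≤ k) (hkphi : k ≤ G.phi) :
    (G.phi : ℝ) ≥
      (Fintype.card V : ℝ) / ((Fintype.card V : ℝ) - G.degPowerMean k) := by
  classical
  set n := Fintype.card V with hndef
  -- the defining set of phi is nonempty
  have hSne : {r | ∃ f : V → Fin r, ∀ i,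
      G.IsSmallSet (Finset.univ.filter fun v => f v = i)}.Nonempty := by
    refine ⟨n, (Fintype.equivFin V : V → Fin n), fun i v hv => ?_⟩
    have hcard : (Finset.univ.filter fun v => (Fintype.equivFin V) v = i).card ≤ 1 := by
      apply Finset.card_le_one.mpr
      intro a ha b hb
      simp only [Finset.mem_filter] at ha hb
      exact (Fintype.equivFin V).injective (ha.2.trans hb.2.symm)
    have hdeg : G.degree v < n := G.degree_lt_card_verts v
    omega
  set r := G.phi with hrdef
  have hmem : r ∈ {r | ∃ f : V → Fin r, ∀ i,
      G.IsSmallSet (Finset.univ.filter fun v => f v = i)} := Nat.sInf_mem hSne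
  obtain ⟨f, hf⟩ := hmem
  have hr1 : 1 ≤ r := by
    by_contra h
    push_neg at h
    obtain ⟨v⟩ : Nonempty V := Fintype.card_pos_iff.mp hn
    have := (f v).isLt
    omega
  -- fiber cards
  set c : Fin r → ℕ := fun i => (Finset.univ.filter fun v => f v = i).card with hcdef
  have hsumc : ∑ i, c i = n := by
    rw [hndef, ← Finset.card_univ]
    exact (Finset.card_eq_sum_card_fiberwise (fun v _ => Finset.mem_univ (f v))).symm
  have hcn : ∀ i, c i ≤ n := fun i => le_trans (Finset.card_filter_le _ _) (by simp [hndef])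
  -- step A (ℕ): degree power sum bounded fiberwise
  have hA : ∑ v, (G.degree v) ^ k ≤ ∑ i, c i * (n - c i) ^ k := by
    rw [← Finset.sum_fiberwise univ f (fun v => (G.degree v) ^ k)]
    apply Finset.sum_le_sum
    intro i _
    calc ∑ v ∈ Finset.univ.filter fun v => f v = i, (G.degree v) ^ k
        ≤ ∑ _v ∈ Finset.univ.filter fun v => f v = i, (n - c i) ^ k :=
          Finset.sum_le_sum fun v hv => Nat.pow_le_pow_left (hf i v hv) k
      _ = c i * (n - c i) ^ k := by rw [Finset.sum_const, smul_eq_mul]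
  -- cast to ℝ
  have hAR : ∑ v, (G.degree v : ℝ) ^ k ≤ ∑ i, (c i : ℝ) * ((n : ℝ) - c i) ^ k := by
    calc ∑ v, (G.degree v : ℝ) ^ k = ((∑ v, (G.degree v) ^ k : ℕ) : ℝ) := by push_cast; rfl
      _ ≤ ((∑ i, c i * (n - c i) ^ k : ℕ) : ℝ) := Nat.cast_le.mpr hA
      _ = ∑ i, (c i : ℝ) * ((n : ℝ) - c i) ^ k := by
          rw [Nat.cast_sum]
          exact Finset.sum_congr rfl fun i _ => by
            rw [Nat.cast_mul, Nat.cast_pow, Nat.cast_sub (hcn i)]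
  have hn0 : (0 : ℝ) < n := by exact_mod_cast hn
  have hr0 : (0 : ℝ) < r := by exact_mod_cast hr1
  set s : ℝ := 1 / r with hsdef
  have hs0 : 0 ≤ s := by positivity
  have hks : (k : ℝ) * s ≤ 1 := by
    rw [hsdef, mul_one_div, div_le_one hr0]
    exact_mod_cast hkphi
  have hs1 : s ≤ 1 := by
    calc s = 1 * s := (one_mul s).symm
      _ ≤ (k : ℝ) * s := by
          apply mul_le_mul_of_nonneg_right _ hs0
          exact_mod_cast hk
      _ ≤ 1 := hks
  -- step B: tangent line bound
  have key : ∀ i : Fin r, (c i : ℝ) / n * (1 - (c i : ℝ) / n) ^ k ≤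
      s * (1 - s) ^ k + (1 - s) ^ (k - 1) * (1 - ((k : ℝ) + 1) * s) * ((c i : ℝ) / n - s) :=
    fun i => tangent_aux_s12 k hk s _ hs0 hks (by positivity)
      (by rw [div_le_one hn0]; exact_mod_cast hcn i)
  have hsumfib : ∑ i : Fin r, (c i : ℝ) / n = 1 := by
    rw [← Finset.sum_div]
    rw [show ∑ i : Fin r, (c i : ℝ) = ((∑ i, c i : ℕ) : ℝ) by push_cast; rfl, hsumc]
    exact div_self (ne_of_gt hn0)
  have hBsum : ∑ i : Fin r, (c i : ℝ) / n * (1 - (c i : ℝ) / n) ^ k ≤ (1 - s) ^ k := by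
    calc ∑ i : Fin r, (c i : ℝ) / n * (1 - (c i : ℝ) / n) ^ k
        ≤ ∑ i : Fin r, (s * (1 - s) ^ k + (1 - s) ^ (k - 1) * (1 - ((k : ℝ) + 1) * s) *
            ((c i : ℝ) / n - s)) := Finset.sum_le_sum fun i _ => key i
      _ = (1 - s) ^ k := by
          rw [Finset.sum_add_distrib, Finset.sum_const, ← Finset.mul_sum,
            Finset.sum_sub_distrib, hsumfib, Finset.sum_const]
          simp only [Finset.card_univ, Fintype.card_fin, nsmul_eq_mul, smul_eq_mul]
          have hrs : (r : ℝ) * s = 1 := by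
            rw [hsdef, mul_one_div, div_self (ne_of_gt hr0)]
          rw [hrs, show (r : ℝ) * (s * (1 - s) ^ k) = ((r : ℝ) * s) * (1 - s) ^ k from by ring,
            hrs]
          ring
  -- combine: ∑ degrees^k ≤ n^(k+1) (1-s)^k
  have htot : ∑ v, (G.degree v : ℝ) ^ k ≤ (n : ℝ) ^ (k + 1) * (1 - s) ^ k := by
    calc ∑ v, (G.degree v : ℝ) ^ k ≤ ∑ i, (c i : ℝ) * ((n : ℝ) - c i) ^ k := hAR
      _ = (n : ℝ) ^ (k + 1) * ∑ i : Fin r, (c i : ℝ) / n * (1 - (c i : ℝ) / n) ^ k := by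
          rw [Finset.mul_sum]
          refine Finset.sum_congr rfl fun i _ => ?_
          have h1 : (1 : ℝ) - (c i : ℝ) / n = ((n : ℝ) - c i) / n := by field_simp
          rw [h1, div_pow]
          field_simp
          ring
      _ ≤ (n : ℝ) ^ (k + 1) * (1 - s) ^ k := by
          apply mul_le_mul_of_nonneg_left hBsum (by positivity)
  -- step C: bound the power mean
  have hbase : (∑ v, (G.degree v : ℝ) ^ k) / n ≤ ((n : ℝ) - n * s) ^ k := by
    rw [div_le_iff₀ hn0]
    calc ∑ v, (G.degree v : ℝ) ^ k ≤ (n : ℝ) ^ (k + 1) * (1 - s) ^ k := htot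
      _ = ((n : ℝ) - n * s) ^ k * n := by
          rw [show (n : ℝ) - n * s = n * (1 - s) by ring, mul_pow, pow_succ]
          ring
  have hns0 : (0 : ℝ) ≤ (n : ℝ) - n * s := by nlinarith
  have hk0 : (k : ℝ) ≠ 0 := Nat.cast_ne_zero.mpr (by omega)
  have hpow : ∀ x : ℝ, 0 ≤ x → ((x ^ k : ℝ) : ℝ) ^ ((1 : ℝ) / k) = x := by
    intro x hx
    rw [← Real.rpow_natCast x k, ← Real.rpow_mul hx, mul_one_div, div_self hk0, Real.rpow_one]
  have hDle : G.degPowerMean k ≤ (n : ℝ) - n * s := by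
    rw [SimpleGraph.degPowerMean, ← hndef]
    calc ((∑ v, (G.degree v : ℝ) ^ k) / n) ^ ((1 : ℝ) / k)
        ≤ (((n : ℝ) - n * s) ^ k) ^ ((1 : ℝ) / k) :=
          Real.rpow_le_rpow (by positivity) hbase (by positivity)
      _ = (n : ℝ) - n * s := hpow _ hns0
  -- step D: conclude
  have hnsr : (n : ℝ) * s = n / r := by rw [hsdef]; ring
  have hden : (n : ℝ) / r ≤ (n : ℝ) - G.degPowerMean k := by
    rw [← hnsr]; linarith
  have hnr0 : (0 : ℝ) < (n : ℝ) / r := by positivity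
  rw [ge_iff_le]
  calc (n : ℝ) / ((n : ℝ) - G.degPowerMean k) ≤ (n : ℝ) / ((n : ℝ) / r) :=
        div_le_div_of_nonneg_left hn0.le hnr0 hden
      _ = r := by field_simp
end

section
/- Let G be a finite simple graph on n ≥ 1 vertices. Then for every natural number s ≥ 3, φ^(s)(G) ≥ n/(n − D_3(G)). -/
open Finset

/-- `α(G)`: the independence number of `G`. -/
noncomputable def SimpleGraph.indepNumSSup {V : Type*} [Fintype V] (G : SimpleGraph V) : ℕ :=
  sSup {m | ∃ W : Finset V, (∀ v ∈ W, ∀ w ∈ W, ¬ G.Adj v w) ∧ W.card = m}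



private lemma tangent_lemma {n m a : ℝ} (ha0 : 0 ≤ a) (han : a ≤ n) (hm0 : 0 ≤ m)
    (hm : 3 * m ≤ n) :
    a * (n - a)^3 ≤ m * (n - m)^3 + ((n - m)^3 - 3 * m * (n - m)^2) * (a - m) := by
  have h1 : 0 ≤ (n - a) * (2*n - 2*m - a) := by nlinarith
  have h2 : 0 ≤ (n - m) * (n - 3*m) := by nlinarith
  nlinarith [mul_nonneg (sq_nonneg (a - m)) (add_nonneg h1 h2)]

private lemma sumg_lemma {r : ℕ} (hr : 1 ≤ r) {n : ℝ} (hn : 0 ≤ n) (a : Fin r → ℝ)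
    (h0 : ∀ i, 0 ≤ a i) (hsum : ∑ i, a i = n) :
    ∑ i, a i * (n - a i)^3 ≤ n * (n - n / r)^3 := by
  have han : ∀ i, a i ≤ n := by
    intro i
    rw [← hsum]
    exact Finset.single_le_sum (fun j _ => h0 j) (mem_univ i)
  match r, hr, a, h0, hsum, han with
  | 1, _, a, h0, hsum, han =>
    have h1 : a 0 = n := by simpa using hsum
    simp only [Fin.sum_univ_one, h1, Nat.cast_one, div_one]
    ring_nf
    nlinarith [h0 0]
  | 2, _, a, h0, hsum, han =>
    have h1 : a 0 + a 1 = n := by simpa [Fin.sum_univ_two] using hsum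
    have e : (n : ℝ) - n / (2:ℕ) = n / 2 := by push_cast; ring
    rw [Fin.sum_univ_two, e, ← h1]
    nlinarith [h0 0, h0 1, sq_nonneg (a 0 - a 1), sq_nonneg ((a 0 - a 1)^2),
      mul_nonneg (h0 0) (h0 1)]
  | (k+3), _, a, h0, hsum, han =>
    have hrpos : (0:ℝ) < ((k+3:ℕ):ℝ) := by positivity
    have hr3 : (3:ℝ) ≤ ((k+3:ℕ):ℝ) := by exact_mod_cast Nat.le_add_left 3 k
    set m : ℝ := n / ((k+3:ℕ):ℝ) with hmdef
    have hm0 : 0 ≤ m := div_nonneg hn hrpos.le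
    have hm : 3 * m ≤ n := by
      rw [hmdef, mul_comm, div_mul_eq_mul_div, div_le_iff₀ hrpos]
      nlinarith
    have hrm : ((k+3:ℕ):ℝ) * m = n := by rw [hmdef]; field_simp
    calc ∑ i, a i * (n - a i)^3
        ≤ ∑ i : Fin (k+3), (m * (n - m)^3 + ((n - m)^3 - 3 * m * (n - m)^2) * (a i - m)) :=
          Finset.sum_le_sum fun i _ => tangent_lemma (h0 i) (han i) hm0 hm
      _ = ((k+3:ℕ):ℝ) * (m * (n - m)^3)
            + ((n - m)^3 - 3 * m * (n - m)^2) * (∑ i, a i - ((k+3:ℕ):ℝ) * m) := by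
          rw [Finset.sum_add_distrib, Finset.sum_const, Finset.card_univ, Fintype.card_fin,
            ← Finset.mul_sum, Finset.sum_sub_distrib, Finset.sum_const, Finset.card_univ,
            Fintype.card_fin, nsmul_eq_mul, nsmul_eq_mul]
      _ = n * (n - m)^3 := by rw [hsum]; linear_combination (3*m*(n-m)^2) * hrm

private lemma cube_sum_le {V : Type*} [DecidableEq V] (W : Finset V) (d : V → ℕ) (c : ℕ)
    {s : ℕ} (hs : 3 ≤ s) (h : ∑ v ∈ W, d v ^ s ≤ W.card * c ^ s) :
    ∑ v ∈ W, (d v : ℝ)^3 ≤ (W.card : ℝ) * (c : ℝ)^3 := by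
  rcases W.eq_empty_or_nonempty with rfl | hne
  · simp
  have hA : (0:ℝ) < W.card := by exact_mod_cast Finset.card_pos.2 hne
  set A : ℝ := (W.card : ℝ) with hAdef
  set p : ℝ := (s : ℝ) / 3 with hpdef
  have hp : 1 ≤ p := by
    rw [hpdef, le_div_iff₀ (by norm_num : (0:ℝ) < 3)]
    exact_mod_cast by simpa using hs
  have hp0 : 0 < p := lt_of_lt_of_le one_pos hp
  have key := Real.rpow_arith_mean_le_arith_mean_rpow W (fun _ => 1/A)
    (fun v => (d v : ℝ)^3) (fun i _ => by positivity)
    (by rw [Finset.sum_const, nsmul_eq_mul]; field_simp; exact hAdef.symm) (fun i _ => by positivity) hp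
  -- rewrite z^p = d^s
  have hz : ∀ v : V, (((d v : ℝ))^3) ^ p = ((d v : ℝ))^s := by
    intro v
    rw [← Real.rpow_natCast ((d v : ℝ)) 3, ← Real.rpow_natCast ((d v : ℝ)) s,
      ← Real.rpow_mul (by positivity)]
    congr 1
    rw [hpdef]
    push_cast
    ring
  simp only [hz] at key
  have hsum : ∑ v ∈ W, (1/A) * ((d v : ℝ))^s ≤ (c:ℝ)^s := by
    rw [← Finset.mul_sum]
    have hcast : (∑ v ∈ W, ((d v : ℝ))^s) ≤ A * (c:ℝ)^s := by
      have := (Nat.cast_le (α := ℝ)).2 h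
      push_cast at this
      convert this using 2 <;> push_cast <;> ring
    rw [one_div, inv_mul_le_iff₀ hA]
    linarith [hcast]
  have key2 : (∑ v ∈ W, (1/A) * ((d v : ℝ))^3) ^ p ≤ (((c:ℝ))^3) ^ p := by
    refine le_trans (le_trans key hsum) (le_of_eq ?_)
    rw [← Real.rpow_natCast ((c : ℝ)) 3, ← Real.rpow_natCast ((c : ℝ)) s,
      ← Real.rpow_mul (by positivity)]
    congr 1
    rw [hpdef]; push_cast; ring
  have hbase : ∑ v ∈ W, (1/A) * ((d v : ℝ))^3 ≤ ((c:ℝ))^3 := by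
    have h1 : (0:ℝ) ≤ ∑ v ∈ W, (1/A) * ((d v : ℝ))^3 :=
      Finset.sum_nonneg fun v _ => by positivity
    have h2 : (0:ℝ) ≤ ((c:ℝ))^3 := by positivity
    exact (Real.rpow_le_rpow_iff h1 h2 hp0).1 key2
  rw [← Finset.mul_sum, one_div, inv_mul_le_iff₀ hA] at hbase
  linarith [hbase]

theorem stmt_13 {V : Type*} [Fintype V] (G : SimpleGraph V) [DecidableRel G.Adj]
    (hn : 1 ≤ Fintype.card V) (s : ℕ) (hs : 3 ≤ s) :
    (G.phiDelta s : ℝ) ≥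
      (Fintype.card V : ℝ) / ((Fintype.card V : ℝ) - G.degPowerMean 3) := by
  classical
  set n : ℕ := Fintype.card V with hndef
  have hV : Nonempty V := Fintype.card_pos_iff.1 (by omega)
  -- the defining set is nonempty
  have hmem : n ∈ {r | ∃ f : V → Fin r,
      ∀ i, G.IsDeltaSmallSet s (Finset.univ.filter fun v => f v = i)} := by
    refine ⟨fun v => (Fintype.equivFin V) v, fun i => ?_⟩
    set W := Finset.univ.filter fun v => (Fintype.equivFin V) v = i with hW
    have hcard : W.card ≤ 1 := by
      refine Finset.card_le_one.2 fun x hx y hy => ?_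
      rw [hW, Finset.mem_filter] at hx hy
      exact (Fintype.equivFin V).injective (hx.2.trans hy.2.symm)
    unfold SimpleGraph.IsDeltaSmallSet
    calc ∑ v ∈ W, G.degree v ^ s ≤ ∑ _v ∈ W, (n - 1) ^ s :=
          Finset.sum_le_sum fun v _ => Nat.pow_le_pow_left
            (Nat.le_sub_one_of_lt (G.degree_lt_card_verts v)) s
      _ = W.card * (n - 1) ^ s := by rw [Finset.sum_const, smul_eq_mul]
      _ ≤ W.card * (n - W.card) ^ s :=
          Nat.mul_le_mul_left _ (Nat.pow_le_pow_left (Nat.sub_le_sub_left hcard n) s)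
  set r : ℕ := G.phiDelta s with hrdef
  have hrmem : r ∈ {r | ∃ f : V → Fin r,
      ∀ i, G.IsDeltaSmallSet s (Finset.univ.filter fun v => f v = i)} :=
    Nat.sInf_mem ⟨n, hmem⟩
  obtain ⟨f, hf⟩ := hrmem
  have hr1 : 1 ≤ r := by
    rcases Nat.eq_zero_or_pos r with h0 | h
    · have := f (Classical.arbitrary V)
      rw [h0] at this
      exact this.elim0
    · exact h
  set W : Fin r → Finset V := fun i => Finset.univ.filter fun v => f v = i with hWdef
  have hcardle : ∀ i, (W i).card ≤ n := fun i => Finset.card_le_univ _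
  -- real quantities
  set a : Fin r → ℝ := fun i => ((W i).card : ℝ) with hadef
  have ha0 : ∀ i, 0 ≤ a i := fun i => Nat.cast_nonneg _
  have hasum : ∑ i, a i = (n : ℝ) := by
    rw [hadef]
    rw [← Nat.cast_sum]
    congr 1
    rw [hndef, ← Finset.card_univ, Finset.card_eq_sum_card_fiberwise
      (f := f) (t := Finset.univ) (fun x _ => Finset.mem_univ _)]
  -- per-class cube bound
  have hkey : ∀ i, ∑ v ∈ W i, (G.degree v : ℝ)^3 ≤ a i * ((n:ℝ) - a i)^3 := by
    intro i
    have h1 := hf i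
    unfold SimpleGraph.IsDeltaSmallSet at h1
    have h2 := cube_sum_le (W i) (fun v => G.degree v) (n - (W i).card) hs h1
    rwa [Nat.cast_sub (hcardle i)] at h2
  -- sum up
  have hsum3 : ∑ v, (G.degree v : ℝ)^3 ≤ (n:ℝ) * ((n:ℝ) - (n:ℝ)/r)^3 := by
    calc ∑ v, (G.degree v : ℝ)^3
        = ∑ i, ∑ v ∈ W i, (G.degree v : ℝ)^3 :=
          (Finset.sum_fiberwise Finset.univ f _).symm
      _ ≤ ∑ i, a i * ((n:ℝ) - a i)^3 := Finset.sum_le_sum fun i _ => hkey i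
      _ ≤ (n:ℝ) * ((n:ℝ) - (n:ℝ)/r)^3 :=
          sumg_lemma hr1 (Nat.cast_nonneg n) a ha0 hasum
  have hnpos : (0:ℝ) < n := by exact_mod_cast hn
  have hrpos : (0:ℝ) < r := by exact_mod_cast hr1
  have hc0 : (0:ℝ) ≤ (n:ℝ) - (n:ℝ)/r := by
    have hr1' : (1:ℝ) ≤ r := by exact_mod_cast hr1
    have : (n:ℝ)/r ≤ n := by
      rw [div_le_iff₀ hrpos]
      nlinarith
    linarith
  -- bound the power mean
  have hD : G.degPowerMean 3 ≤ (n:ℝ) - (n:ℝ)/r := by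
    unfold SimpleGraph.degPowerMean
    have hx0 : (0:ℝ) ≤ (∑ v, (G.degree v : ℝ)^3) / (n:ℝ) := by positivity
    have hxle : (∑ v, (G.degree v : ℝ)^3) / (n:ℝ) ≤ ((n:ℝ) - (n:ℝ)/r)^3 := by
      rw [div_le_iff₀ hnpos]
      calc (∑ v, (G.degree v : ℝ)^3) ≤ (n:ℝ) * ((n:ℝ) - (n:ℝ)/r)^3 := hsum3
        _ = ((n:ℝ) - (n:ℝ)/r)^3 * n := by ring
    calc ((∑ v, (G.degree v : ℝ) ^ 3) / ((Fintype.card V : ℝ))) ^ ((1:ℝ)/(3:ℕ))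
        ≤ (((n:ℝ) - (n:ℝ)/r)^3) ^ ((1:ℝ)/(3:ℕ)) := by
          apply Real.rpow_le_rpow hx0 ?_ (by norm_num)
          exact_mod_cast hxle
      _ = (n:ℝ) - (n:ℝ)/r := by
          rw [← Real.rpow_natCast ((n:ℝ) - (n:ℝ)/r) 3, ← Real.rpow_mul hc0]
          norm_num
  -- finish
  have hpos : (0:ℝ) < (n:ℝ) - G.degPowerMean 3 := by
    have : (0:ℝ) < (n:ℝ)/r := by positivity
    linarith
  rw [ge_iff_le, div_le_iff₀ hpos]
  have h1 : (n:ℝ)/r ≤ (n:ℝ) - G.degPowerMean 3 := by linarith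
  calc (n:ℝ) = (r:ℝ) * ((n:ℝ)/r) := by field_simp
    _ ≤ (r:ℝ) * ((n:ℝ) - G.degPowerMean 3) := by
        exact mul_le_mul_of_nonneg_left h1 (by positivity)
end

section
/- Let G be a finite simple graph on n ≥ 1 vertices with φ^(4)(G) ≠ 2. Then for every natural number s ≥ 4, φ^(s)(G) ≥ n/(n − D_4(G)). -/
open Finset

/-! ### Auxiliary polynomial lemmas -/

private lemma aux_tangent {t c : ℝ} (ht0 : 0 ≤ t) (ht1 : t ≤ 1) (hc0 : 0 ≤ c) (hc : c ≤ 1/4) :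
    t * (1-t)^4 ≤ c*(1-c)^4 + (1-c)^3*(1-5*c)*(t-c) := by
  have key : c*(1-c)^4 + (1-c)^3*(1-5*c)*(t-c) - t*(1-t)^4
      = (t-c)^2 * ((1-c)^2*(1-4*c) + (1-t)*((1-c)*(1-3*c)) + (1-t)^2*(1-2*c) + (1-t)^3) := by
    ring
  have h1 : (0:ℝ) ≤ (1-c)^2*(1-4*c) := by nlinarith [sq_nonneg (1-c)]
  have h2 : (0:ℝ) ≤ (1-t)*((1-c)*(1-3*c)) := by
    apply mul_nonneg (by linarith) (mul_nonneg (by linarith) (by linarith))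
  have h3 : (0:ℝ) ≤ (1-t)^2*(1-2*c) := by nlinarith [sq_nonneg (1-t)]
  have h4 : (0:ℝ) ≤ (1-t)^3 := pow_nonneg (by linarith) 3
  nlinarith [mul_nonneg (sq_nonneg (t-c)) (by linarith : (0:ℝ) ≤ (1-c)^2*(1-4*c) + (1-t)*((1-c)*(1-3*c)) + (1-t)^2*(1-2*c) + (1-t)^3)]

private lemma aux_gmax {t : ℝ} (h0 : 0 ≤ t) (h1 : t ≤ 1) : t*(1-t)^4 ≤ 256/3125 := by
  have := aux_tangent h0 h1 (by norm_num : (0:ℝ) ≤ 1/5) (by norm_num)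
  norm_num at this
  nlinarith [this]

private lemma aux_ghalf {t : ℝ} (h0 : 1/2 ≤ t) (h1 : t ≤ 1) : t*(1-t)^4 ≤ 1/32 := by
  have hu0 : (0:ℝ) ≤ 1 - t := by linarith
  have h3 : (1-t)^3 ≤ 1/8 := by nlinarith [sq_nonneg (1-t)]
  have h30 : (0:ℝ) ≤ (1-t)^3 := pow_nonneg hu0 3
  have htu : t*(1-t) ≤ 1/4 := by nlinarith [sq_nonneg (1-2*t)]
  calc t*(1-t)^4 = (t*(1-t))*(1-t)^3 := by ring
    _ ≤ (1/4)*(1/8) := mul_le_mul htu h3 h30 (by norm_num)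
    _ = 1/32 := by norm_num

private lemma aux_gtan3 {t : ℝ} (h0 : 0 ≤ t) (h1 : t ≤ 1/2) : t*(1-t)^4 ≤ 32/243 - 16/81*t := by
  have key : 32/243 - 16/81*t - t*(1-t)^4
      = (t-1/3)^2 * (-(4/27) + (1-t)^2*(1/3) + (1-t)^3) := by ring
  have h2 : (1/4:ℝ) ≤ (1-t)^2 := by nlinarith
  have h3 : (1/8:ℝ) ≤ (1-t)^3 := by nlinarith
  nlinarith [mul_nonneg (sq_nonneg (t-1/3)) (by linarith : (0:ℝ) ≤ -(4/27) + (1-t)^2*(1/3) + (1-t)^3)]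

private lemma aux_three {a b c : ℝ} (ha0 : 0 ≤ a) (hb0 : 0 ≤ b) (hc0 : 0 ≤ c) (h : a+b+c = 1) :
    a*(1-a)^4 + b*(1-b)^4 + c*(1-c)^4 ≤ (1 - 1/3)^4 := by
  have ha1 : a ≤ 1 := by linarith
  have hb1 : b ≤ 1 := by linarith
  have hc1 : c ≤ 1 := by linarith
  have hrhs : ((1:ℝ) - 1/3)^4 = 16/81 := by norm_num
  rw [hrhs]
  by_cases ha : a ≤ 1/2
  · by_cases hb : b ≤ 1/2
    · by_cases hc : c ≤ 1/2
      · have := aux_gtan3 ha0 ha; have := aux_gtan3 hb0 hb; have := aux_gtan3 hc0 hc; linarith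
      · push_neg at hc
        have := aux_ghalf (le_of_lt hc) hc1
        have := aux_gmax ha0 ha1; have := aux_gmax hb0 hb1
        linarith
    · push_neg at hb
      have := aux_ghalf (le_of_lt hb) hb1
      have := aux_gmax ha0 ha1; have := aux_gmax hc0 hc1
      linarith
  · push_neg at ha
    have := aux_ghalf (le_of_lt ha) ha1
    have := aux_gmax hb0 hb1; have := aux_gmax hc0 hc1
    linarith

private lemma aux_comb {r : ℕ} (hr : 3 ≤ r) (t : Fin r → ℝ) (h0 : ∀ i, 0 ≤ t i)
    (h1 : ∑ i, t i = 1) : ∑ i, t i * (1 - t i)^4 ≤ (1 - 1/(r:ℝ))^4 := by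
  have ht1 : ∀ i, t i ≤ 1 := by
    intro i
    calc t i ≤ ∑ j, t j := Finset.single_le_sum (fun j _ => h0 j) (mem_univ i)
    _ = 1 := h1
  rcases eq_or_lt_of_le hr with h3 | h4
  · subst h3
    rw [Fin.sum_univ_three] at h1 ⊢
    have h := aux_three (h0 0) (h0 1) (h0 2) h1
    norm_num at h ⊢
    linarith
  · have h4 : (4:ℕ) ≤ r := h4
    have hr0 : (0:ℝ) < (r:ℝ) := by
      have : (0:ℕ) < r := by omega
      exact_mod_cast this
    set c : ℝ := 1/(r:ℝ) with hc_def
    have hc0 : 0 ≤ c := by positivity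
    have hc4 : c ≤ 1/4 := by
      rw [hc_def]
      rw [div_le_div_iff₀ hr0 (by norm_num)]
      have : (4:ℝ) ≤ (r:ℝ) := by exact_mod_cast h4
      linarith
    have hrc : (r:ℝ) * c = 1 := by
      rw [hc_def]; field_simp
    calc ∑ i, t i * (1 - t i)^4
        ≤ ∑ i, (c*(1-c)^4 + (1-c)^3*(1-5*c)*(t i - c)) :=
          Finset.sum_le_sum fun i _ => aux_tangent (h0 i) (ht1 i) hc0 hc4
      _ = (r:ℝ)*(c*(1-c)^4) + (1-c)^3*(1-5*c)*(∑ i, (t i - c)) := by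
          rw [Finset.sum_add_distrib, Finset.sum_const, card_univ, Fintype.card_fin,
            ← Finset.mul_sum]
          push_cast
          ring
      _ = (1 - c)^4 := by
          have hsum : ∑ i, (t i - c) = 0 := by
            rw [Finset.sum_sub_distrib, h1, Finset.sum_const, card_univ, Fintype.card_fin]
            push_cast
            rw [nsmul_eq_mul]
            linarith [hrc]
          rw [hsum, mul_zero, add_zero, ← mul_assoc, hrc, one_mul]
      _ = (1 - 1/(r:ℝ))^4 := by rw [hc_def]

/-! ### Graph-theoretic auxiliary lemmas -/

private lemma aux_delta_real {V : Type*} [Fintype V] (G : SimpleGraph V) [DecidableRel G.Adj]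
    {s : ℕ} (hs : 4 ≤ s) {W : Finset V} (h : G.IsDeltaSmallSet s W) :
    ∑ v ∈ W, (G.degree v : ℝ)^4 ≤ W.card * ((Fintype.card V : ℝ) - W.card)^4 := by
  rcases W.eq_empty_or_nonempty with rfl | hW
  · simp
  have hx0 : 0 < (W.card : ℝ) := by exact_mod_cast Finset.card_pos.mpr hW
  have hxn : W.card ≤ Fintype.card V := W.card_le_univ
  set m : ℕ := Fintype.card V - W.card with hm_def
  have hmR : (m : ℝ) = (Fintype.card V : ℝ) - W.card := by
    rw [hm_def]; exact Nat.cast_sub hxn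
  rw [← hmR]
  have hR : ∑ v ∈ W, (G.degree v : ℝ)^s ≤ (W.card : ℝ) * (m : ℝ)^s := by
    exact_mod_cast h
  have hp : (1:ℝ) ≤ (s:ℝ)/4 := by
    have : (4:ℝ) ≤ (s:ℝ) := by exact_mod_cast hs
    linarith
  have hjensen := Real.rpow_arith_mean_le_arith_mean_rpow W
    (fun _ => 1/(W.card:ℝ)) (fun v => (G.degree v : ℝ)^4)
    (fun i _ => by positivity)
    (by rw [Finset.sum_const, nsmul_eq_mul]; field_simp)
    (fun i _ => by positivity) hp
  have hpow : ∀ v : V, ((G.degree v : ℝ)^4) ^ ((s:ℝ)/4) = (G.degree v : ℝ)^s := by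
    intro v
    rw [← Real.rpow_natCast (G.degree v : ℝ) 4, ← Real.rpow_mul (by positivity)]
    norm_num
    rw [mul_div_cancel₀ _ (by norm_num : (4:ℝ) ≠ 0), Real.rpow_natCast]
  simp only [hpow] at hjensen
  rw [← Finset.mul_sum, ← Finset.mul_sum] at hjensen
  have hkey : ((1/(W.card:ℝ)) * ∑ v ∈ W, (G.degree v : ℝ)^4) ^ ((s:ℝ)/4)
      ≤ ((m:ℝ)^4) ^ ((s:ℝ)/4) := by
    refine hjensen.trans ?_
    have h1 : (1/(W.card:ℝ)) * ∑ v ∈ W, (G.degree v : ℝ)^s ≤ (m:ℝ)^s := by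
      rw [div_mul_eq_mul_div, one_mul, div_le_iff₀ hx0]
      calc ∑ v ∈ W, (G.degree v : ℝ)^s ≤ (W.card : ℝ) * (m : ℝ)^s := hR
        _ = (m:ℝ)^s * W.card := by ring
    calc (1/(W.card:ℝ)) * ∑ v ∈ W, (G.degree v : ℝ)^s ≤ (m:ℝ)^s := h1
      _ = ((m:ℝ)^4) ^ ((s:ℝ)/4) := by
          rw [← Real.rpow_natCast (m:ℝ) 4, ← Real.rpow_mul (by positivity)]
          norm_num
          rw [mul_div_cancel₀ _ (by norm_num : (4:ℝ) ≠ 0), Real.rpow_natCast]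
  have hmean : (1/(W.card:ℝ)) * ∑ v ∈ W, (G.degree v : ℝ)^4 ≤ (m:ℝ)^4 := by
    have h1 : (0:ℝ) ≤ (1/(W.card:ℝ)) * ∑ v ∈ W, (G.degree v : ℝ)^4 := by positivity
    have h2 : (0:ℝ) ≤ (m:ℝ)^4 := by positivity
    have hp0 : (0:ℝ) < (s:ℝ)/4 := by linarith
    exact (Real.rpow_le_rpow_iff h1 h2 hp0).mp hkey
  rw [div_mul_eq_mul_div, one_mul, div_le_iff₀ hx0] at hmean
  linarith [hmean]

private lemma aux_card_mem {V : Type*} [Fintype V] (G : SimpleGraph V) [DecidableRel G.Adj]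
    (k : ℕ) : Fintype.card V ∈
      {r | ∃ f : V → Fin r, ∀ i, G.IsDeltaSmallSet k (Finset.univ.filter fun v => f v = i)} := by
  refine ⟨Fintype.equivFin V, fun i => ?_⟩
  have hset : (Finset.univ.filter fun v => (Fintype.equivFin V) v = i)
      = {(Fintype.equivFin V).symm i} := by
    ext v
    simp [Equiv.eq_symm_apply, eq_comm]
  rw [SimpleGraph.IsDeltaSmallSet, hset]
  rw [Finset.sum_singleton, Finset.card_singleton, one_mul]
  exact Nat.pow_le_pow_left (Nat.le_sub_one_of_lt (G.degree_lt_card_verts _)) k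

private lemma aux_phiDelta_mem {V : Type*} [Fintype V] (G : SimpleGraph V) [DecidableRel G.Adj]
    (k : ℕ) : G.phiDelta k ∈
      {r | ∃ f : V → Fin r, ∀ i, G.IsDeltaSmallSet k (Finset.univ.filter fun v => f v = i)} :=
  Nat.sInf_mem ⟨_, aux_card_mem G k⟩

private lemma aux_one {V : Type*} [Fintype V] (G : SimpleGraph V) [DecidableRel G.Adj]
    {k : ℕ} (hk : k ≠ 0) {r : ℕ} (hr : r = 1)
    (h : ∃ f : V → Fin r, ∀ i, G.IsDeltaSmallSet k (Finset.univ.filter fun v => f v = i))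
    (v : V) : G.degree v = 0 := by
  subst hr
  obtain ⟨f, hf⟩ := h
  have hset : (Finset.univ.filter fun v => f v = 0) = Finset.univ := by
    apply Finset.filter_true_of_mem
    intro x _
    exact Subsingleton.elim _ _
  have := hf 0
  rw [SimpleGraph.IsDeltaSmallSet, hset, Finset.card_univ, Nat.sub_self,
    zero_pow hk, mul_zero] at this
  have hz := Nat.le_zero.mp this
  have hv : (G.degree v)^k = 0 := by
    have := (Finset.sum_eq_zero_iff.mp hz) v (mem_univ v)
    exact this
  exact pow_eq_zero_iff hk |>.mp hv

private lemma aux_mono {V : Type*} [Fintype V] (G : SimpleGraph V) [DecidableRel G.Adj]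
    {s : ℕ} (hs : 4 ≤ s) {W : Finset V} (h : G.IsDeltaSmallSet s W) :
    G.IsDeltaSmallSet 4 W := by
  have hR := aux_delta_real G hs h
  rw [SimpleGraph.IsDeltaSmallSet, ← Nat.cast_le (α := ℝ)]
  push_cast [Nat.cast_sub W.card_le_univ]
  exact hR

theorem stmt_14 {V : Type*} [Fintype V] (G : SimpleGraph V) [DecidableRel G.Adj]
    (hn : 1 ≤ Fintype.card V) (h4 : G.phiDelta 4 ≠ 2) (s : ℕ) (hs : 4 ≤ s) :
    (G.phiDelta s : ℝ) ≥
      (Fintype.card V : ℝ) / ((Fintype.card V : ℝ) - G.degPowerMean 4) := by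
  have hV : Nonempty V := Fintype.card_pos_iff.mp hn
  have hnR : (0:ℝ) < (Fintype.card V : ℝ) := by exact_mod_cast hn
  set r : ℕ := G.phiDelta s with hr_def
  obtain ⟨f, hf⟩ := aux_phiDelta_mem G s
  by_cases hdeg : ∀ v, G.degree v = 0
  · -- all degrees zero
    have hD : G.degPowerMean 4 = 0 := by
      rw [SimpleGraph.degPowerMean]
      simp only [hdeg]
      norm_num
    rw [hD, sub_zero, div_self (ne_of_gt hnR)]
    have hr1 : 1 ≤ r := by
      rcases Nat.eq_zero_or_pos r with h0 | h1
      · exfalso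
        rw [hr_def] at h0
        rw [h0] at f
        exact (f (Classical.arbitrary V)).elim0
      · exact h1
    exact_mod_cast hr1
  · push_neg at hdeg
    obtain ⟨v0, hv0⟩ := hdeg
    -- the number of parts is at least 3
    have hr0 : r ≠ 0 := by
      intro h0
      rw [hr_def] at h0
      rw [h0] at f
      exact (f v0).elim0
    have hr1 : r ≠ 1 := fun h1 =>
      hv0 (aux_one G (by omega : s ≠ 0) (hr_def.symm.trans h1) ⟨f, hf⟩ v0)
    have hr2 : r ≠ 2 := by
      intro h2
      have hle : G.phiDelta 4 ≤ 2 := by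
        rw [← h2, hr_def]
        exact Nat.sInf_le ⟨f, fun i => aux_mono G hs (hf i)⟩
      have h4lt : G.phiDelta 4 ≤ 1 := by omega
      have h4mem := aux_phiDelta_mem G 4
      rcases Nat.eq_zero_or_pos (G.phiDelta 4) with h0 | h1
      · obtain ⟨g, _⟩ := h4mem
        rw [h0] at g
        exact (g v0).elim0
      · have h41 : G.phiDelta 4 = 1 := by omega
        exact hv0 (aux_one G (by omega : (4:ℕ) ≠ 0) h41 h4mem v0)
    have hr3 : 3 ≤ r := by omega
    have hrR : (0:ℝ) < (r:ℝ) := by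
      have : 0 < r := by omega
      exact_mod_cast this
    set x : Fin r → ℕ := fun i => (Finset.univ.filter fun v => f v = i).card with hx_def
    have hxsum : ∑ i, x i = Fintype.card V := by
      have h := Finset.card_eq_sum_card_fiberwise
        (f := f) (s := Finset.univ) (t := Finset.univ) (fun v _ => Finset.mem_univ (f v))
      rw [Finset.card_univ] at h
      exact h.symm
    have hA : ∑ v, (G.degree v:ℝ)^4 ≤ ∑ i, (x i : ℝ) * ((Fintype.card V:ℝ) - x i)^4 := by
      rw [← Finset.sum_fiberwise Finset.univ f (fun v => (G.degree v:ℝ)^4)]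
      exact Finset.sum_le_sum fun i _ => aux_delta_real G hs (hf i)
    set t : Fin r → ℝ := fun i => (x i : ℝ)/(Fintype.card V : ℝ) with ht_def
    have ht0 : ∀ i, 0 ≤ t i := fun i => by positivity
    have hxsumR : ∑ i, ((x i : ℕ):ℝ) = (Fintype.card V : ℝ) := by exact_mod_cast hxsum
    have ht1 : ∑ i, t i = 1 := by
      show ∑ i, ((x i : ℝ)/(Fintype.card V : ℝ)) = 1
      rw [← Finset.sum_div, hxsumR, div_self (ne_of_gt hnR)]
    have hcomb := aux_comb hr3 t ht0 ht1
    have hscale : ∑ i, (x i:ℝ) * ((Fintype.card V:ℝ) - x i)^4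
        = (Fintype.card V:ℝ)^5 * ∑ i, t i * (1 - t i)^4 := by
      rw [Finset.mul_sum]
      apply Finset.sum_congr rfl
      intro i _
      have hx : (x i : ℝ) = (Fintype.card V:ℝ) * t i := by
        show (x i : ℝ) = (Fintype.card V:ℝ) * ((x i : ℝ)/(Fintype.card V : ℝ))
        field_simp
      rw [hx]
      ring
    have hfinal : ∑ v, (G.degree v:ℝ)^4 ≤ (Fintype.card V:ℝ)^5 * (1 - 1/(r:ℝ))^4 := by
      calc ∑ v, (G.degree v:ℝ)^4 ≤ ∑ i, (x i : ℝ) * ((Fintype.card V:ℝ) - x i)^4 := hA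
        _ = (Fintype.card V:ℝ)^5 * ∑ i, t i * (1 - t i)^4 := hscale
        _ ≤ (Fintype.card V:ℝ)^5 * (1 - 1/(r:ℝ))^4 :=
            mul_le_mul_of_nonneg_left hcomb (by positivity)
    have hb0 : (0:ℝ) ≤ (Fintype.card V:ℝ) - (Fintype.card V:ℝ)/(r:ℝ) := by
      have h1r : (1:ℝ) ≤ (r:ℝ) := by
        have : 1 ≤ r := by omega
        exact_mod_cast this
      have := div_le_self (le_of_lt hnR) h1r
      linarith
    have hAle : (∑ v, (G.degree v:ℝ)^4)/(Fintype.card V:ℝ)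
        ≤ ((Fintype.card V:ℝ) - (Fintype.card V:ℝ)/(r:ℝ))^4 := by
      rw [div_le_iff₀ hnR]
      refine hfinal.trans (le_of_eq ?_)
      field_simp
    have hD4 : G.degPowerMean 4 ≤ (Fintype.card V:ℝ) - (Fintype.card V:ℝ)/(r:ℝ) := by
      rw [SimpleGraph.degPowerMean]
      have hstep : ((∑ v, (G.degree v : ℝ) ^ 4) / (Fintype.card V : ℝ)) ^ ((1:ℝ)/((4:ℕ):ℝ))
          ≤ (((Fintype.card V:ℝ) - (Fintype.card V:ℝ)/(r:ℝ))^4) ^ ((1:ℝ)/((4:ℕ):ℝ)) :=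
        Real.rpow_le_rpow (by positivity) hAle (by norm_num)
      refine le_trans (by exact_mod_cast hstep) (le_of_eq ?_)
      rw [← Real.rpow_natCast ((Fintype.card V:ℝ) - (Fintype.card V:ℝ)/(r:ℝ)) 4,
        ← Real.rpow_mul hb0]
      norm_num
    have hpos : 0 < (Fintype.card V:ℝ) - G.degPowerMean 4 := by
      have h1 : (0:ℝ) < (Fintype.card V:ℝ)/(r:ℝ) := by positivity
      linarith
    rw [ge_iff_le, div_le_iff₀ hpos]
    have hstep : (Fintype.card V:ℝ)/(r:ℝ) ≤ (Fintype.card V:ℝ) - G.degPowerMean 4 := by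
      linarith
    calc (Fintype.card V:ℝ) = (r:ℝ) * ((Fintype.card V:ℝ)/(r:ℝ)) := by field_simp
      _ ≤ (r:ℝ) * ((Fintype.card V:ℝ) - G.degPowerMean 4) :=
          mul_le_mul_of_nonneg_left hstep (le_of_lt hrR)
end

section
/- For every finite simple graph G there exists a natural number k_0 = k_0(G) such that α^(k)(G) = S(G) for all k ≥ k_0 (so the nonincreasing sequence α^(1)(G) ≥ α^(2)(G) ≥ ⋯ stabilizes at S(G)). -/
open Finset

/-- `α(G)`: the independence number of `G`. -/
noncomputable def SimpleGraph.indepNumFin {V : Type*} [Fintype V] (G : SimpleGraph V) : ℕ :=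
  sSup {m | ∃ W : Finset V, (∀ v ∈ W, ∀ w ∈ W, ¬ G.Adj v w) ∧ W.card = m}

lemma pow_aux16 (m : ℕ) : ∀ j : ℕ, m ^ (j + 1) + (j + 1) * m ^ j ≤ (m + 1) ^ (j + 1) := by
  intro j
  induction j with
  | zero => simp
  | succ j ih =>
    have h : (m + 1) ^ (j + 2) = (m + 1) ^ (j + 1) * (m + 1) := by ring
    have h2 : (m ^ (j + 1) + (j + 1) * m ^ j) * (m + 1) ≤ (m + 1) ^ (j + 1) * (m + 1) :=
      Nat.mul_le_mul_right _ ih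
    have h3 : m ^ (j + 2) = m ^ (j + 1) * m := by ring
    have h4 : m ^ (j + 1) = m ^ j * m := by ring
    nlinarith [Nat.zero_le (m ^ j), Nat.zero_le (m ^ (j+1))]

lemma key16 (n m k : ℕ) (hm : m ≤ n) (hk : n * n + 1 ≤ k) : n * m ^ k < (m + 1) ^ k := by
  obtain ⟨j, rfl⟩ : ∃ j, k = j + 1 := ⟨k - 1, by omega⟩
  rcases Nat.eq_zero_or_pos m with rfl | hm1
  · simp
  · have h1 := pow_aux16 m j
    have hmj : 1 ≤ m ^ j := Nat.one_le_pow _ _ hm1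
    have h4 : m ^ (j + 1) = m ^ j * m := by ring
    have h5 : (n * n + 1) * m ^ j ≤ (j + 1) * m ^ j := Nat.mul_le_mul_right _ hk
    calc n * m ^ (j + 1) = (n * m) * m ^ j := by rw [h4]; ring
      _ ≤ (n * n) * m ^ j := Nat.mul_le_mul_right _ (Nat.mul_le_mul_left _ hm)
      _ < (n * n + 1) * m ^ j := by nlinarith
      _ ≤ (j + 1) * m ^ j := h5
      _ ≤ m ^ (j + 1) + (j + 1) * m ^ j := Nat.le_add_left _ _
      _ ≤ (m + 1) ^ (j + 1) := h1

theorem stmt_16 {V : Type*} [Fintype V] (G : SimpleGraph V) [DecidableRel G.Adj] :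
    ∃ k₀ : ℕ, ∀ k, k₀ ≤ k → G.alphaDelta k = G.maxSmallSetSize := by
  set n := Fintype.card V with hn
  refine ⟨n * n + 1, fun k hk => ?_⟩
  have hiff : ∀ W : Finset V, G.IsDeltaSmallSet k W ↔ G.IsSmallSet W := by
    intro W
    constructor
    · intro h v hv
      by_contra hd
      push_neg at hd
      have hsum : (G.degree v) ^ k ≤ ∑ w ∈ W, (G.degree w) ^ k :=
        Finset.single_le_sum (f := fun w => (G.degree w) ^ k) (fun _ _ => Nat.zero_le _) hv
      set m := n - W.card with hm
      have hWn : W.card ≤ n := Finset.card_le_univ W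
      have key : n * m ^ k < (m + 1) ^ k := key16 n m k (by omega) hk
      have h1 : (m + 1) ^ k ≤ (G.degree v) ^ k := Nat.pow_le_pow_left hd k
      have h2 : W.card * m ^ k ≤ n * m ^ k := Nat.mul_le_mul_right _ hWn
      have h3 := h
      unfold SimpleGraph.IsDeltaSmallSet at h3
      rw [← hn, ← hm] at h3
      omega
    · intro h
      unfold SimpleGraph.IsDeltaSmallSet
      calc ∑ v ∈ W, (G.degree v) ^ k ≤ ∑ _v ∈ W, (n - W.card) ^ k :=
            Finset.sum_le_sum fun v hv => Nat.pow_le_pow_left (h v hv) k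
        _ = W.card * (n - W.card) ^ k := by rw [Finset.sum_const, smul_eq_mul]
  unfold SimpleGraph.alphaDelta SimpleGraph.maxSmallSetSize
  congr 1
  ext mm
  simp only [Set.mem_setOf_eq, hiff]
end

section
/- Let G be a finite simple graph on n vertices with e(G) edges, let A ⊆ V(G) be a δ_1-small set of G with V(G) \ A nonempty, and let s = D_1(V(G) \ A) be the average degree of the vertices outside A. Then |A| ≤ (n − s)/2 + √((n − s)²/4 + n·s − 2·e(G)). -/
open Finset

/-- `α(G)`: the independence number of `G`. -/
noncomputable def SimpleGraph.indepNumSmall {V : Type*} [Fintype V] (G : SimpleGraph V) : ℕ :=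
  sSup {m | ∃ W : Finset V, (∀ v ∈ W, ∀ w ∈ W, ¬ G.Adj v w) ∧ W.card = m}

theorem stmt_19 {V : Type*} [Fintype V] [DecidableEq V] (G : SimpleGraph V)
    [DecidableRel G.Adj] (A : Finset V) (hA : G.IsDeltaSmallSet 1 A)
    (hne : (Finset.univ \ A).Nonempty) (s : ℝ)
    (hs : s = (∑ v ∈ Finset.univ \ A, (G.degree v : ℝ)) / ((Finset.univ \ A).card : ℝ)) :
    (A.card : ℝ) ≤ ((Fintype.card V : ℝ) - s) / 2 +
      Real.sqrt (((Fintype.card V : ℝ) - s) ^ 2 / 4 +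
        (Fintype.card V : ℝ) * s - 2 * (G.edgeFinset.card : ℝ)) := by

  have hsub : A ⊆ Finset.univ := Finset.subset_univ A
  have hm : (Finset.univ \ A).card = Fintype.card V - A.card := by
    rw [Finset.card_sdiff_of_subset hsub, Finset.card_univ]
  have han : A.card ≤ Fintype.card V := by
    simpa using Finset.card_le_card hsub
  have hm0 : 0 < (Finset.univ \ A).card := Finset.card_pos.mpr hne
  set a := (A.card : ℝ) with ha
  set N := (Fintype.card V : ℝ) with hN
  have hmr : ((Finset.univ \ A).card : ℝ) = N - a := by
    rw [hm, Nat.cast_sub han]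
  have hNa : 0 < N - a := by rw [← hmr]; exact_mod_cast hm0
  have hsum : (∑ v ∈ A, (G.degree v : ℝ)) + ∑ v ∈ Finset.univ \ A, (G.degree v : ℝ)
      = 2 * (G.edgeFinset.card : ℝ) := by
    rw [add_comm, Finset.sum_sdiff hsub]
    exact_mod_cast congrArg (Nat.cast : ℕ → ℝ) G.sum_degrees_eq_twice_card_edges
  have hsA : (∑ v ∈ A, (G.degree v : ℝ)) ≤ a * (N - a) := by
    have h := hA
    simp only [SimpleGraph.IsDeltaSmallSet, pow_one] at h
    calc (∑ v ∈ A, (G.degree v : ℝ)) = ((∑ v ∈ A, G.degree v : ℕ) : ℝ) := by push_cast; rfl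
      _ ≤ ((A.card * (Fintype.card V - A.card) : ℕ) : ℝ) := by exact_mod_cast h
      _ = a * (N - a) := by rw [Nat.cast_mul, Nat.cast_sub han]
  have hss : ∑ v ∈ Finset.univ \ A, (G.degree v : ℝ) = s * (N - a) := by
    rw [hs, hmr]; field_simp
  have key : (a - (N - s) / 2) ^ 2 ≤ (N - s) ^ 2 / 4 + N * s - 2 * (G.edgeFinset.card : ℝ) := by
    nlinarith [hsA, hsum, hss]
  have h1 : a - (N - s) / 2 ≤ Real.sqrt ((N - s) ^ 2 / 4 + N * s - 2 * (G.edgeFinset.card : ℝ)) := by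
    calc a - (N - s) / 2 ≤ |a - (N - s) / 2| := le_abs_self _
      _ = Real.sqrt ((a - (N - s) / 2) ^ 2) := (Real.sqrt_sq_eq_abs _).symm
      _ ≤ _ := Real.sqrt_le_sqrt key
  linarith
end
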